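/- arXiv:1509.09167 — 9 statements merged into one kernel-verified Lean document; each statement's English description precedes it below -/
import Mathlib

section
/- Let a > 0, b < 0, c > 0, and let X be a random variable with Gamma distribution of shape a/2 and rate −b/2, i.e., with density f(x) = (Γ(a/2))^{-1} (−b/2)^{a/2} x^{a/2−1} e^{bx/2} on (0,∞). Then E[1/(X+c)] = ψ_c / c, where ψ_c = (−bc/2)^{a/2} e^{−bc/2} Γ(1−a/2, −bc/2) and Γ(·,·) is the upper incomplete gamma function. -/
open Real Set

/-- Upper incomplete gamma function `Γ(α, y) = ∫_y^∞ e^{−t} t^{α−1} dt`. -/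
noncomputable def uiGamma (α y : ℝ) : ℝ := ∫ t in Set.Ioi y, Real.exp (-t) * t ^ (α - 1)

/-- Density of the Gamma(a/2, −b/2) distribution at `x`. -/
noncomputable def gDens (a b x : ℝ) : ℝ :=
  (Real.Gamma (a / 2))⁻¹ * (-b / 2) ^ (a / 2) * x ^ (a / 2 - 1) * Real.exp (b * x / 2)

/-- `ψ_c = (−bc/2)^{a/2} e^{−bc/2} Γ(1−a/2, −bc/2)`. -/
noncomputable def psi (a b c : ℝ) : ℝ :=
  (-(b * c) / 2) ^ (a / 2) * Real.exp (-(b * c) / 2) * uiGamma (1 - a / 2) (-(b * c) / 2)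

open MeasureTheory

section Aux

lemma shift_Ioi (a : ℝ) (f : ℝ → ℝ) : ∫ x in Ioi a, f x = ∫ x in Ioi 0, f (x + a) := by
  have h := (measurePreserving_add_right (volume : Measure ℝ) a)
  have hpre : (fun x => x + a) ⁻¹' Ioi a = Ioi 0 := by ext x; simp
  conv_lhs => rw [← h.map_eq]
  rw [(measurableEmbedding_addRight a).setIntegral_map, hpre]

lemma exp_int (r : ℝ) (hr : 0 < r) : ∫ s in Ioi (0:ℝ), Real.exp (-(r*s)) = r⁻¹ := by
  have := MeasureTheory.integral_comp_mul_left_Ioi (fun t => Real.exp (-t)) 0 hr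
  simp only [mul_zero, smul_eq_mul, integral_exp_neg_Ioi, neg_zero, Real.exp_zero, mul_one] at this
  simpa using this

lemma uiGamma_sub (α lam c : ℝ) (hl : 0 < lam) (hc : 0 < c) :
    uiGamma (1 - α) (lam * c)
      = c ^ (1-α) * Real.exp (-(lam*c)) * ∫ s in Ioi (0:ℝ), Real.exp (-(c*s)) * (lam+s) ^ (-α) := by
  have h1 := MeasureTheory.integral_comp_mul_left_Ioi
    (fun t => Real.exp (-t) * t ^ ((1-α) - 1)) lam hc
  simp only [smul_eq_mul] at h1
  have h1' : (∫ t in Ioi (c*lam), Real.exp (-t) * t ^ ((1-α)-1))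
      = c * ∫ u in Ioi lam, Real.exp (-(c*u)) * (c*u) ^ ((1-α)-1) := by
    rw [show (fun u : ℝ => Real.exp (-(c*u)) * (c*u) ^ ((1-α)-1))
        = (fun u : ℝ => (fun t => Real.exp (-t) * t ^ ((1-α)-1)) (c*u)) from rfl, h1,
      ← mul_assoc, mul_inv_cancel₀ hc.ne', one_mul]
  rw [uiGamma, mul_comm lam c, h1',
    shift_Ioi lam (fun u => Real.exp (-(c*u)) * (c*u) ^ ((1-α)-1)),
    ← MeasureTheory.integral_const_mul, ← MeasureTheory.integral_const_mul]
  refine setIntegral_congr_fun measurableSet_Ioi (fun s hs => ?_)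
  have hs0 : (0:ℝ) < s := hs
  have hsl : (0:ℝ) < s + lam := by linarith
  have e3 : (1-α)-1 = -α := by ring
  have e1 : Real.exp (-(c*(s+lam))) = Real.exp (-(lam*c)) * Real.exp (-(c*s)) := by
    rw [← Real.exp_add]; ring_nf
  have e2 : c * c ^ (-α) = c ^ (1-α) := by
    rw [show (1:ℝ)-α = 1 + (-α) by ring, Real.rpow_add hc, Real.rpow_one]
  simp only [e3]
  rw [Real.mul_rpow hc.le hsl.le, e1, ← e2, add_comm lam s]
  ring_nf

lemma base_integrable (α lam : ℝ) (hα : 0 < α) (hl : 0 < lam) :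
    IntegrableOn (fun x : ℝ => x ^ (α-1) * Real.exp (-(lam*x))) (Ioi 0) := by
  have := integrableOn_rpow_mul_exp_neg_mul_rpow (s := α-1) (p := 1) (b := lam)
    (by linarith) one_pos hl
  refine this.congr_fun (fun x hx => ?_) measurableSet_Ioi
  beta_reduce
  rw [Real.rpow_one, neg_mul]

lemma fubini_part (α lam c : ℝ) (hα : 0 < α) (hl : 0 < lam) (hc : 0 < c) :
    (∫ x in Ioi (0:ℝ), (x+c)⁻¹ * (x ^ (α-1) * Real.exp (-(lam*x))))
      = Real.Gamma α * ∫ s in Ioi (0:ℝ), Real.exp (-(c*s)) * (lam+s) ^ (-α) := by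
  have hFmeas : Measurable (fun p : ℝ × ℝ =>
      p.1 ^ (α-1) * Real.exp (-(lam*p.1)) * Real.exp (-((p.1+c)*p.2))) := by fun_prop
  have hInt : Integrable (fun p : ℝ × ℝ =>
      p.1 ^ (α-1) * Real.exp (-(lam*p.1)) * Real.exp (-((p.1+c)*p.2)))
      ((volume.restrict (Ioi 0)).prod (volume.restrict (Ioi 0))) := by
    rw [integrable_prod_iff hFmeas.aestronglyMeasurable]
    constructor
    · filter_upwards [ae_restrict_mem measurableSet_Ioi] with x hx
      have hxc : (0:ℝ) < x + c := by have : (0:ℝ) < x := hx; linarith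
      exact ((exp_neg_integrableOn_Ioi 0 hxc).congr_fun
        (fun s _ => by rw [neg_mul]) measurableSet_Ioi).const_mul _
    · apply Integrable.mono' ((base_integrable α lam hα hl).const_mul c⁻¹)
      · exact hFmeas.norm.aestronglyMeasurable.integral_prod_right'
      · filter_upwards [ae_restrict_mem measurableSet_Ioi] with x hx
        have hx0 : (0:ℝ) < x := hx
        have hxc : (0:ℝ) < x + c := by linarith
        have hnn : ∀ s : ℝ,
            0 ≤ x ^ (α-1) * Real.exp (-(lam*x)) * Real.exp (-((x+c)*s)) := fun s => by
          positivity
        have hcalc : (∫ s in Ioi (0:ℝ), ‖x ^ (α-1) * Real.exp (-(lam*x)) * Real.exp (-((x+c)*s))‖)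
            = x ^ (α-1) * Real.exp (-(lam*x)) * (x+c)⁻¹ := by
          simp only [fun s => Real.norm_of_nonneg (hnn s)]
          rw [MeasureTheory.integral_const_mul, exp_int _ hxc]
        rw [Real.norm_of_nonneg (integral_nonneg fun s => norm_nonneg _), hcalc]
        have h1 : (x+c)⁻¹ ≤ c⁻¹ := by
          apply inv_anti₀ hc; linarith
        calc x ^ (α-1) * Real.exp (-(lam*x)) * (x+c)⁻¹
            ≤ x ^ (α-1) * Real.exp (-(lam*x)) * c⁻¹ :=
              mul_le_mul_of_nonneg_left h1 (by positivity)
          _ = c⁻¹ * (x ^ (α-1) * Real.exp (-(lam*x))) := by ring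
  have stepA : (∫ x in Ioi (0:ℝ), (x+c)⁻¹ * (x ^ (α-1) * Real.exp (-(lam*x))))
      = ∫ x in Ioi (0:ℝ), ∫ s in Ioi (0:ℝ),
          x ^ (α-1) * Real.exp (-(lam*x)) * Real.exp (-((x+c)*s)) := by
    refine setIntegral_congr_fun measurableSet_Ioi (fun x hx => ?_)
    have hx0 : (0:ℝ) < x := hx
    have hxc : (0:ℝ) < x + c := by linarith
    rw [MeasureTheory.integral_const_mul, exp_int _ hxc]
    ring
  have stepB : (∫ x in Ioi (0:ℝ), ∫ s in Ioi (0:ℝ),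
        x ^ (α-1) * Real.exp (-(lam*x)) * Real.exp (-((x+c)*s)))
      = ∫ s in Ioi (0:ℝ), ∫ x in Ioi (0:ℝ),
          x ^ (α-1) * Real.exp (-(lam*x)) * Real.exp (-((x+c)*s)) :=
    MeasureTheory.integral_integral_swap hInt
  have stepC : (∫ s in Ioi (0:ℝ), ∫ x in Ioi (0:ℝ),
        x ^ (α-1) * Real.exp (-(lam*x)) * Real.exp (-((x+c)*s)))
      = ∫ s in Ioi (0:ℝ), Real.exp (-(c*s)) * ((1/(lam+s)) ^ α * Real.Gamma α) := by
    refine setIntegral_congr_fun measurableSet_Ioi (fun s hs => ?_)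
    have hs0 : (0:ℝ) < s := hs
    have hls : (0:ℝ) < lam + s := by linarith
    have : (∫ x in Ioi (0:ℝ), x ^ (α-1) * Real.exp (-(lam*x)) * Real.exp (-((x+c)*s)))
        = ∫ x in Ioi (0:ℝ), Real.exp (-(c*s)) * (x ^ (α-1) * Real.exp (-((lam+s)*x))) := by
      refine setIntegral_congr_fun measurableSet_Ioi (fun x hx => ?_)
      rw [mul_assoc, ← Real.exp_add, mul_comm (Real.exp _), mul_assoc, ← Real.exp_add]
      ring_nf
    rw [this, MeasureTheory.integral_const_mul, integral_rpow_mul_exp_neg_mul_Ioi hα hls]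
  rw [stepA, stepB, stepC, ← MeasureTheory.integral_const_mul]
  refine setIntegral_congr_fun measurableSet_Ioi (fun s hs => ?_)
  have hs0 : (0:ℝ) < s := hs
  have hls : (0:ℝ) < lam + s := by linarith
  rw [one_div, ← Real.rpow_neg_one (lam+s), ← Real.rpow_mul hls.le, neg_one_mul]
  ring

end Aux

theorem expectation_inv_shift (a b c : ℝ) (ha : 0 < a) (hb : b < 0) (hc : 0 < c) :
    (∫ x in Set.Ioi (0 : ℝ), (x + c)⁻¹ * gDens a b x) = psi a b c / c := by
  have hα : 0 < a/2 := by linarith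
  have hl : 0 < -b/2 := by linarith
  have key := fubini_part (a/2) (-b/2) c hα hl hc
  have sub := uiGamma_sub (a/2) (-b/2) c hl hc
  set J := ∫ s in Ioi (0:ℝ), Real.exp (-(c*s)) * ((-b/2)+s) ^ (-(a/2)) with hJ
  have hg : Real.Gamma (a/2) ≠ 0 := (Real.Gamma_pos_of_pos hα).ne'
  have hL : (∫ x in Set.Ioi (0:ℝ), (x + c)⁻¹ * gDens a b x) = (-b/2)^(a/2) * J := by
    have : (∫ x in Set.Ioi (0:ℝ), (x + c)⁻¹ * gDens a b x)
        = ∫ x in Ioi (0:ℝ), ((Real.Gamma (a/2))⁻¹ * (-b/2)^(a/2)) *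
            ((x+c)⁻¹ * (x ^ (a/2-1) * Real.exp (-((-b/2)*x)))) := by
      refine setIntegral_congr_fun measurableSet_Ioi (fun x hx => ?_)
      rw [gDens, show -((-b/2)*x) = b*x/2 by ring]
      ring
    rw [this, MeasureTheory.integral_const_mul, key]
    field_simp
  have hbc : -(b*c)/2 = (-b/2) * c := by ring
  have hR : psi a b c = (-b/2)^(a/2) * c^(a/2) * Real.exp ((-b/2)*c) *
      (c^(1-a/2) * Real.exp (-((-b/2)*c)) * J) := by
    rw [psi, hbc, sub, Real.mul_rpow hl.le hc.le]
  rw [hL, hR]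
  have hcc : c^(a/2) * c^(1-a/2) = c := by
    rw [← Real.rpow_add hc]
    norm_num
  rw [Real.exp_neg]
  rw [eq_div_iff hc.ne']
  calc (-b/2)^(a/2) * J * c = (-b/2)^(a/2) * (c^(a/2)*c^(1-a/2)) *
        (Real.exp ((-b/2)*c) * (Real.exp ((-b/2)*c))⁻¹) * J := by
        rw [hcc, mul_inv_cancel₀ (Real.exp_ne_zero _), mul_one]; ring
    _ = (-b/2)^(a/2) * c^(a/2) * Real.exp ((-b/2)*c) *
        (c^(1-a/2) * (Real.exp ((-b/2)*c))⁻¹ * J) := by ring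
end

section
/- Let a > 0, b < 0, c > 0, and let X ~ Gamma(a/2, −b/2). Then E[X/(X+c)] = 1 − ψ_c, where ψ_c = (−bc/2)^{a/2} e^{−bc/2} Γ(1−a/2, −bc/2). -/
open Real Set

set_option maxHeartbeats 1000000

open MeasureTheory in
lemma hInt (s r : ℝ) (hs : 0 < s) (hr : 0 < r) :
    IntegrableOn (fun x => x ^ (s-1) * Real.exp (-(r*x))) (Ioi (0:ℝ)) := by
  have h := (integrableOn_Ioi_comp_mul_left_iff (fun t => Real.exp (-t) * t ^ (s-1)) 0 hr).2
    (by simpa using Real.GammaIntegral_convergent hs)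
  have h2 := (h.const_mul (r ^ (s-1))⁻¹)
  refine (IntegrableOn.congr_fun h2 (fun x hx => ?_) measurableSet_Ioi)
  have hx0 : (0:ℝ) < x := hx
  rw [Real.mul_rpow hr.le hx0.le]
  field_simp [(Real.rpow_pos_of_pos hr (s-1)).ne']


open MeasureTheory in
lemma inv_eq_integral (r : ℝ) (hr : 0 < r) :
    (∫ u in Ioi (0:ℝ), Real.exp (-(r*u))) = r⁻¹ := by
  have := integral_comp_mul_left_Ioi (fun t => Real.exp (-t)) 0 hr
  simp only [mul_zero, integral_exp_neg_Ioi, neg_zero, Real.exp_zero, smul_eq_mul, mul_one] at this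
  simpa using this

open MeasureTheory in
lemma shift_Ioi_s3 (H : ℝ → ℝ) (l : ℝ) :
    (∫ u in Ioi (0:ℝ), H (u + l)) = ∫ v in Ioi l, H v := by
  rw [← integral_indicator measurableSet_Ioi, ← integral_indicator measurableSet_Ioi]
  rw [← integral_add_right_eq_self (fun x => (Ioi l).indicator H x) l]
  congr 1
  ext u
  by_cases h : u ∈ Ioi (0:ℝ)
  · rw [indicator_of_mem h, indicator_of_mem (by simpa [mem_Ioi] using h)]
  · rw [indicator_of_notMem h, indicator_of_notMem (by simpa [mem_Ioi] using h)]

open MeasureTheory in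
lemma hIntDiv (s l c : ℝ) (hs : 0 < s) (hl : 0 < l) (hc : 0 < c) :
    IntegrableOn (fun x => x ^ (s-1) * Real.exp (-(l*x)) / (x + c)) (Ioi (0:ℝ)) := by
  refine Integrable.mono' ((hInt s l hs hl).const_mul c⁻¹) ?_ ?_
  · apply Measurable.aestronglyMeasurable; fun_prop
  · filter_upwards [ae_restrict_mem measurableSet_Ioi] with x hx
    have hx0 : (0:ℝ) < x := hx
    have hxc : (0:ℝ) < x + c := by linarith
    rw [Real.norm_eq_abs, abs_of_nonneg (by positivity)]
    calc x ^ (s-1) * Real.exp (-(l*x)) / (x + c)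
        ≤ x ^ (s-1) * Real.exp (-(l*x)) / c := by
          apply div_le_div_of_nonneg_left (by positivity) hc (by linarith)
      _ = c⁻¹ * (x ^ (s-1) * Real.exp (-(l*x))) := by ring

open MeasureTheory in
noncomputable def kf (s l c x u : ℝ) : ℝ :=
  x ^ (s-1) * Real.exp (-(l*x)) * Real.exp (-((x+c)*u))

open MeasureTheory in
lemma key (s l c : ℝ) (hs : 0 < s) (hl : 0 < l) (hc : 0 < c) :
    (∫ x in Ioi (0:ℝ), (x ^ (s-1) * Real.exp (-(l*x))) / (x + c))
      = Real.Gamma s * (c ^ (s-1) * (Real.exp (c*l) * uiGamma (1-s) (c*l))) := by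
  have hmeas : AEStronglyMeasurable (Function.uncurry (kf s l c))
      ((volume.restrict (Ioi (0:ℝ))).prod (volume.restrict (Ioi (0:ℝ)))) := by
    apply Measurable.aestronglyMeasurable
    have : Measurable fun p : ℝ × ℝ =>
        p.1 ^ (s-1) * Real.exp (-(l*p.1)) * Real.exp (-((p.1+c)*p.2)) := by fun_prop
    exact this
  have hinner : ∀ x ∈ Ioi (0:ℝ),
      (∫ u in Ioi (0:ℝ), kf s l c x u) = x ^ (s-1) * Real.exp (-(l*x)) / (x + c) := by
    intro x hx
    have hxc : (0:ℝ) < x + c := by have : (0:ℝ) < x := hx; linarith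
    simp only [kf, integral_const_mul]
    rw [inv_eq_integral _ hxc, div_eq_mul_inv]
  have hbase := hInt s l hs hl
  have hgood : Integrable (fun x => x ^ (s-1) * Real.exp (-(l*x)) / (x + c))
      (volume.restrict (Ioi (0:ℝ))) := hIntDiv s l c hs hl hc
  have hintf : Integrable (Function.uncurry (kf s l c))
      ((volume.restrict (Ioi (0:ℝ))).prod (volume.restrict (Ioi (0:ℝ)))) := by
    rw [integrable_prod_iff hmeas]
    constructor
    · filter_upwards [ae_restrict_mem measurableSet_Ioi] with x hx
      have hxc : (0:ℝ) < x + c := by have : (0:ℝ) < x := hx; linarith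
      have h1 : IntegrableOn (fun u => Real.exp (-((x+c)*u))) (Ioi (0:ℝ)) := by
        have h2 := exp_neg_integrableOn_Ioi (0:ℝ) hxc
        rw [show (fun u : ℝ => Real.exp (-((x+c)*u))) = fun u : ℝ => Real.exp (-(x+c)*u) from
          funext fun u => by rw [neg_mul]]
        exact h2
      have := h1.const_mul (x ^ (s-1) * Real.exp (-(l*x)))
      simpa [kf, mul_assoc] using this
    · refine hgood.congr ?_
      filter_upwards [ae_restrict_mem measurableSet_Ioi] with x hx
      have hx0 : (0:ℝ) < x := hx
      rw [← hinner x hx]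
      refine (setIntegral_congr_fun measurableSet_Ioi (fun u hu => ?_)).symm
      simp only [Function.uncurry, kf]
      rw [Real.norm_eq_abs, abs_of_nonneg (by positivity)]
  have hswap : (∫ x in Ioi (0:ℝ), ∫ u in Ioi (0:ℝ), kf s l c x u)
      = ∫ u in Ioi (0:ℝ), ∫ x in Ioi (0:ℝ), kf s l c x u := integral_integral_swap hintf
  have hLHS : (∫ x in Ioi (0:ℝ), (x ^ (s-1) * Real.exp (-(l*x))) / (x + c))
      = ∫ x in Ioi (0:ℝ), ∫ u in Ioi (0:ℝ), kf s l c x u :=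
    (setIntegral_congr_fun measurableSet_Ioi (fun x hx => (hinner x hx))).symm
  have hx_int : ∀ u ∈ Ioi (0:ℝ),
      (∫ x in Ioi (0:ℝ), kf s l c x u) = Real.Gamma s * (Real.exp (-(c*u)) * (1/(l+u)) ^ s) := by
    intro u hu
    have hu0 : (0:ℝ) < u := hu
    have hlu : (0:ℝ) < l + u := by linarith
    have heq : ∀ x, kf s l c x u
        = Real.exp (-(c*u)) * (x ^ (s-1) * Real.exp (-((l+u)*x))) := by
      intro x
      simp only [kf]
      rw [mul_assoc, ← Real.exp_add, mul_comm (Real.exp _), mul_assoc, ← Real.exp_add]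
      ring_nf
    rw [setIntegral_congr_fun measurableSet_Ioi (fun x _ => heq x), integral_const_mul,
      Real.integral_rpow_mul_exp_neg_mul_Ioi hs hlu]
    ring
  rw [hLHS, hswap, setIntegral_congr_fun measurableSet_Ioi hx_int, integral_const_mul]
  congr 1
  have step1 : (∫ u in Ioi (0:ℝ), Real.exp (-(c*u)) * (1/(l+u)) ^ s)
      = ∫ u in Ioi (0:ℝ), (fun v => Real.exp (c*l) * (Real.exp (-(c*v)) * (1/v) ^ s)) (u + l) := by
    refine setIntegral_congr_fun measurableSet_Ioi (fun u hu => ?_)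
    simp only []
    rw [← mul_assoc, ← Real.exp_add]
    ring_nf
  rw [step1, shift_Ioi_s3 (fun v => Real.exp (c*l) * (Real.exp (-(c*v)) * (1/v) ^ s)) l,
    integral_const_mul]
  have step2 : (∫ v in Ioi l, Real.exp (-(c*v)) * (1/v) ^ s)
      = ∫ v in Ioi l, (fun t => c ^ s * (Real.exp (-t) * t ^ ((1-s)-1))) (c * v) := by
    refine setIntegral_congr_fun measurableSet_Ioi (fun v hv => ?_)
    have hv0 : (0:ℝ) < v := lt_trans hl hv
    simp only []
    rw [show (1-s)-1 = -s by ring, Real.rpow_neg (by positivity : (0:ℝ) ≤ c*v),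
      Real.mul_rpow hc.le hv0.le, one_div, Real.inv_rpow hv0.le]
    rw [mul_inv]
    field_simp [(Real.rpow_pos_of_pos hc s).ne']
  rw [step2, integral_const_mul, integral_comp_mul_left_Ioi
    (fun t => Real.exp (-t) * t ^ ((1-s)-1)) l hc]
  have hcc : c ^ s * c⁻¹ = c ^ (s-1) := by
    rw [← Real.rpow_neg_one c, ← Real.rpow_add hc]; ring_nf
  rw [uiGamma, smul_eq_mul, ← hcc]
  ring

open MeasureTheory in
theorem expectation_X_div_shift (a b c : ℝ) (ha : 0 < a) (hb : b < 0) (hc : 0 < c) :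
    (∫ x in Set.Ioi (0 : ℝ), x / (x + c) * gDens a b x) = 1 - psi a b c := by
  have hs : 0 < a/2 := by linarith
  have hl : 0 < -b/2 := by linarith
  set s := a/2
  set l := -b/2 with hldef
  set K := (Real.Gamma s)⁻¹ * l ^ s with hK
  have hG : (0:ℝ) < Real.Gamma s := Real.Gamma_pos_of_pos hs
  have hgd : ∀ x : ℝ, gDens a b x = K * (x ^ (s-1) * Real.exp (-(l*x))) := by
    intro x
    rw [gDens, hK]
    have : Real.exp (b * x / 2) = Real.exp (-(l*x)) := by
      congr 1; rw [hldef]; ring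
    rw [this]
    ring
  have hsplit : ∀ x ∈ Ioi (0:ℝ), x / (x + c) * gDens a b x
      = K * (x ^ (s-1) * Real.exp (-(l*x)))
        - (c * K) * (x ^ (s-1) * Real.exp (-(l*x)) / (x + c)) := by
    intro x hx
    have hx0 : (0:ℝ) < x := hx
    have hxc : (0:ℝ) < x + c := by linarith
    rw [hgd x]
    field_simp
    ring
  rw [setIntegral_congr_fun measurableSet_Ioi hsplit]
  rw [integral_sub (((hInt s l hs hl).const_mul K))
      (((hIntDiv s l c hs hl hc).const_mul (c*K)))]
  rw [integral_const_mul, integral_const_mul,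
    Real.integral_rpow_mul_exp_neg_mul_Ioi hs hl, key s l c hs hl hc]
  have h1 : K * ((1/l) ^ s * Real.Gamma s) = 1 := by
    rw [hK, one_div, Real.inv_rpow hl.le]
    field_simp [(Real.rpow_pos_of_pos hl s).ne']
  have h2 : c * K * (Real.Gamma s * (c ^ (s-1) * (Real.exp (c*l) * uiGamma (1-s) (c*l))))
      = psi a b c := by
    rw [psi]
    have hcl : -(b*c)/2 = c * l := by rw [hldef]; ring
    have hone : 1 - a/2 = 1 - s := rfl
    rw [hcl, hone, hK]
    have hcc : c * c ^ (s-1) = c ^ s := by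
      nth_rewrite 1 [← Real.rpow_one c]
      rw [← Real.rpow_add hc]; ring_nf
    have hmul : (c*l) ^ s = c ^ s * l ^ s := Real.mul_rpow hc.le hl.le
    field_simp [hG.ne', hmul, ← hcc]
    rw [hmul, ← hcc]
    ring
  rw [h1, h2]
end

section
/- Let a > 0, b < 0, c > 0, and let X ~ Gamma(a/2, −b/2). Then E[X/(X+c)²] = (a/(2c)) ψ_c + (b/2)(1 − ψ_c), where ψ_c = (−bc/2)^{a/2} e^{−bc/2} Γ(1−a/2, −bc/2). -/
open Real Set

open MeasureTheory Filter Topology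

section helpers

lemma myexp {p : ℝ} (hp : 0 < p) :
    ∫ s in Ioi (0:ℝ), exp (-(p * s)) = p⁻¹ := by
  have h := integral_comp_mul_left_Ioi (fun t => exp (-t)) 0 hp
  simp only [mul_zero, smul_eq_mul] at h
  rw [h, integral_exp_neg_Ioi_zero, mul_one]

lemma mygamma {α r : ℝ} (hα : 0 < α) (hr : 0 < r) :
    ∫ x in Ioi (0:ℝ), x ^ (α - 1) * exp (-(r * x)) = Real.Gamma α * r ^ (-α) := by
  rw [integral_rpow_mul_exp_neg_mul_Ioi hα hr, one_div, Real.inv_rpow hr.le,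
    ← Real.rpow_neg hr.le, mul_comm]

lemma myint {s r : ℝ} (hs : -1 < s) (hr : 0 < r) :
    IntegrableOn (fun x : ℝ => x ^ s * exp (-(r * x))) (Ioi 0) := by
  refine (integrableOn_rpow_mul_exp_neg_mul_rpow hs one_pos hr).congr_fun
    (fun x hx => ?_) measurableSet_Ioi
  dsimp only
  rw [Real.rpow_one, neg_mul]

lemma mycont {s β c : ℝ} (hc : 0 < c) :
    ContinuousOn (fun x : ℝ => x ^ s * exp (-(β * x)) * (x + c)⁻¹) (Ioi 0) := by
  have c1 : ContinuousOn (fun x : ℝ => x ^ s) (Ioi 0) := fun x hx =>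
    (Real.continuousAt_rpow_const x s (Or.inl (ne_of_gt hx))).continuousWithinAt
  have c2 : Continuous (fun x : ℝ => exp (-(β * x))) :=
    Real.continuous_exp.comp (continuous_const.mul continuous_id).neg
  have c3 : ContinuousOn (fun x : ℝ => (x + c)⁻¹) (Ioi 0) :=
    (continuous_id.add continuous_const).continuousOn.inv₀
      (fun x hx => by have : (0:ℝ) < x := hx; show x + c ≠ 0; positivity)
  exact (c1.mul c2.continuousOn).mul c3

lemma myint2 {s β c : ℝ} (hs : -1 < s) (hβ : 0 < β) (hc : 0 < c) :
    IntegrableOn (fun x : ℝ => x ^ s * exp (-(β * x)) * (x + c)⁻¹) (Ioi 0) := by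
  refine Integrable.mono' ((myint hs hβ).const_mul c⁻¹)
    ((mycont hc).aestronglyMeasurable measurableSet_Ioi) ?_
  filter_upwards [ae_restrict_mem measurableSet_Ioi] with x hx
  have hx0 : (0:ℝ) < x := hx
  have hxc : (0:ℝ) < x + c := by linarith
  rw [norm_of_nonneg (by positivity)]
  have h1 : (x + c)⁻¹ ≤ c⁻¹ := inv_anti₀ hc (by linarith)
  have h2 : (0:ℝ) ≤ x ^ s * exp (-(β * x)) := by positivity
  calc x ^ s * exp (-(β * x)) * (x + c)⁻¹ ≤ x ^ s * exp (-(β * x)) * c⁻¹ :=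
        mul_le_mul_of_nonneg_left h1 h2
    _ = c⁻¹ * (x ^ s * exp (-(β * x))) := by ring

lemma myint3 {s β c : ℝ} (hs : -1 < s) (hβ : 0 < β) (hc : 0 < c) :
    IntegrableOn (fun x : ℝ => x ^ s * exp (-(β * x)) * ((x + c) ^ 2)⁻¹) (Ioi 0) := by
  have c3 : ContinuousOn (fun x : ℝ => ((x + c) ^ 2)⁻¹) (Ioi 0) :=
    (((continuous_id.add continuous_const).pow 2).continuousOn).inv₀
      (fun x hx => by have : (0:ℝ) < x := hx; show (x + c) ^ 2 ≠ 0; positivity)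
  have c1 : ContinuousOn (fun x : ℝ => x ^ s) (Ioi 0) := fun x hx =>
    (Real.continuousAt_rpow_const x s (Or.inl (ne_of_gt hx))).continuousWithinAt
  have c2 : Continuous (fun x : ℝ => exp (-(β * x))) :=
    Real.continuous_exp.comp (continuous_const.mul continuous_id).neg
  refine Integrable.mono' ((myint hs hβ).const_mul (c ^ 2)⁻¹)
    (((c1.mul c2.continuousOn).mul c3).aestronglyMeasurable measurableSet_Ioi) ?_
  filter_upwards [ae_restrict_mem measurableSet_Ioi] with x hx
  have hx0 : (0:ℝ) < x := hx
  have hxc : (0:ℝ) < x + c := by linarith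
  rw [norm_of_nonneg (by positivity)]
  have h1 : ((x + c) ^ 2)⁻¹ ≤ (c ^ 2)⁻¹ :=
    inv_anti₀ (by positivity) (by nlinarith)
  have h2 : (0:ℝ) ≤ x ^ s * exp (-(β * x)) := by positivity
  calc x ^ s * exp (-(β * x)) * ((x + c) ^ 2)⁻¹
      ≤ x ^ s * exp (-(β * x)) * (c ^ 2)⁻¹ := mul_le_mul_of_nonneg_left h1 h2
    _ = (c ^ 2)⁻¹ * (x ^ s * exp (-(β * x))) := by ring

lemma myexpint {p : ℝ} (hp : 0 < p) : IntegrableOn (fun s : ℝ => exp (-(p * s))) (Ioi 0) :=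
  (exp_neg_integrableOn_Ioi 0 hp).congr_fun (fun s _ => by dsimp only; rw [neg_mul]) measurableSet_Ioi

lemma myshift (f : ℝ → ℝ) (y : ℝ) :
    ∫ t in Ioi y, f t = ∫ u in Ioi (0:ℝ), f (u + y) := by
  rw [← integral_indicator measurableSet_Ioi, ← integral_indicator measurableSet_Ioi,
    ← integral_add_right_eq_self ((Ioi y).indicator f) y]
  congr 1
  ext u
  by_cases h : u ∈ Ioi (0:ℝ)
  · rw [Set.indicator_of_mem h, Set.indicator_of_mem (by simpa using h)]
  · rw [Set.indicator_of_notMem h, Set.indicator_of_notMem (by simpa using h)]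

lemma myJ {α β c : ℝ} (hβ : 0 < β) (hc : 0 < c) :
    ∫ x in Ioi (0:ℝ), exp (-(β * x)) * (x + c) ^ (-α)
      = (β / c) ^ (α - 1) * ∫ s in Ioi (0:ℝ), exp (-(c * s)) * (s + β) ^ (-α) := by
  have hbc : 0 < β / c := div_pos hβ hc
  have h := integral_comp_mul_left_Ioi (fun s => exp (-(c * s)) * (s + β) ^ (-α)) 0 hbc
  simp only [mul_zero, smul_eq_mul] at h
  have h2 : ∀ x ∈ Ioi (0:ℝ), exp (-(c * (β / c * x))) * (β / c * x + β) ^ (-α)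
      = (β / c) ^ (-α) * (exp (-(β * x)) * (x + c) ^ (-α)) := by
    intro x hx
    have hx0 : (0:ℝ) < x := hx
    have e1 : c * (β / c * x) = β * x := by field_simp
    have e2 : β / c * x + β = (β / c) * (x + c) := by field_simp
    rw [e1, e2, Real.mul_rpow hbc.le (by linarith : (0:ℝ) ≤ x + c)]
    ring
  rw [setIntegral_congr_fun measurableSet_Ioi h2, integral_const_mul] at h
  have hne : (β / c) ^ (-α) ≠ 0 := (Real.rpow_pos_of_pos hbc _).ne'
  have h3 : (β/c) ^ (α-1) = ((β/c) ^ (-α))⁻¹ * (β/c)⁻¹ := by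
    rw [← Real.rpow_neg_one (β/c), ← Real.rpow_neg hbc.le, ← Real.rpow_add hbc]
    ring_nf
  rw [h3, mul_assoc, ← h, inv_mul_cancel_left₀ hne]

lemma myuiGamma {α β c : ℝ} (hβ : 0 < β) (hc : 0 < c) :
    uiGamma (1 - α) (β * c)
      = β ^ (1 - α) * exp (-(β * c)) * ∫ x in Ioi (0:ℝ), exp (-(β * x)) * (x + c) ^ (-α) := by
  have h0 : (1 - α) - 1 = -α := by ring
  rw [uiGamma, h0, myshift (fun t => exp (-t) * t ^ (-α)) (β * c)]
  have h := integral_comp_mul_left_Ioi (fun u => exp (-(u + β * c)) * (u + β * c) ^ (-α)) 0 hβ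
  simp only [mul_zero, smul_eq_mul] at h
  have h2 : ∀ x ∈ Ioi (0:ℝ), exp (-(β * x + β * c)) * (β * x + β * c) ^ (-α)
      = β ^ (-α) * exp (-(β * c)) * (exp (-(β * x)) * (x + c) ^ (-α)) := by
    intro x hx
    have hx0 : (0:ℝ) < x := hx
    have e1 : -(β * x + β * c) = -(β * x) + -(β * c) := by ring
    have e2 : β * x + β * c = β * (x + c) := by ring
    rw [e1, Real.exp_add, e2, Real.mul_rpow hβ.le (by linarith : (0:ℝ) ≤ x + c)]
    ring
  rw [setIntegral_congr_fun measurableSet_Ioi h2, integral_const_mul] at h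
  have hβne : β ≠ 0 := hβ.ne'
  have h4 : β ^ (1 - α) = β * β ^ (-α) := by
    rw [show (1 - α) = 1 + -α by ring, Real.rpow_add hβ, Real.rpow_one]
  rw [h4]
  field_simp at h ⊢
  linarith

lemma myI1 {α β c : ℝ} (hα : 0 < α) (hβ : 0 < β) (hc : 0 < c) :
    ∫ x in Ioi (0:ℝ), x ^ (α - 1) * exp (-(β * x)) * (x + c)⁻¹
      = Real.Gamma α * ∫ s in Ioi (0:ℝ), exp (-(c * s)) * (s + β) ^ (-α) := by
  set μ := volume.restrict (Ioi (0:ℝ)) with hμ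
  set F : ℝ → ℝ → ℝ := fun x s => x ^ (α - 1) * exp (-(β * x)) * exp (-((x + c) * s)) with hF
  have hmeas : AEStronglyMeasurable (Function.uncurry F) (μ.prod μ) := by
    apply Measurable.aestronglyMeasurable
    fun_prop
  have hinner : ∀ x ∈ Ioi (0:ℝ), (∫ s in Ioi (0:ℝ), F x s)
      = x ^ (α - 1) * exp (-(β * x)) * (x + c)⁻¹ := by
    intro x hx
    have hx0 : (0:ℝ) < x := hx
    simp only [hF]
    rw [MeasureTheory.integral_const_mul, myexp (by linarith : (0:ℝ) < x + c)]
  have hnonneg : ∀ x ∈ Ioi (0:ℝ), ∀ s : ℝ, 0 ≤ F x s := by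
    intro x hx s
    have hx0 : (0:ℝ) < x := hx
    simp only [hF]
    positivity
  have hint : Integrable (Function.uncurry F) (μ.prod μ) := by
    rw [integrable_prod_iff hmeas]
    simp only [Function.uncurry_apply_pair]
    constructor
    · filter_upwards [ae_restrict_mem measurableSet_Ioi] with x hx
      have hxc : (0:ℝ) < x + c := by linarith [mem_Ioi.mp hx]
      have h2 : Integrable (fun s => (x ^ (α - 1) * exp (-(β * x))) * exp (-((x + c) * s))) μ :=
        (myexpint hxc).const_mul _
      simpa only [hF] using h2
    · refine ((myint2 (by linarith : (-1:ℝ) < α - 1) hβ hc).congr ?_ : _)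
      filter_upwards [ae_restrict_mem measurableSet_Ioi] with x hx
      rw [← hinner x hx]
      exact (setIntegral_congr_fun measurableSet_Ioi
        (fun s hs => norm_of_nonneg (hnonneg x hx s))).symm
  calc ∫ x in Ioi (0:ℝ), x ^ (α - 1) * exp (-(β * x)) * (x + c)⁻¹
      = ∫ x in Ioi (0:ℝ), ∫ s in Ioi (0:ℝ), F x s :=
        (setIntegral_congr_fun measurableSet_Ioi hinner).symm
    _ = ∫ s in Ioi (0:ℝ), ∫ x in Ioi (0:ℝ), F x s := integral_integral_swap hint
    _ = ∫ s in Ioi (0:ℝ), exp (-(c * s)) * (Real.Gamma α * (β + s) ^ (-α)) := by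
        apply setIntegral_congr_fun measurableSet_Ioi
        intro s hs
        dsimp only
        have hs0 : (0:ℝ) < s := hs
        have hstep : ∀ x ∈ Ioi (0:ℝ), F x s
            = exp (-(c * s)) * (x ^ (α - 1) * exp (-((β + s) * x))) := by
          intro x hx
          simp only [hF]
          rw [mul_assoc, ← Real.exp_add, show -(β * x) + -((x + c) * s)
            = -(c * s) + -((β + s) * x) by ring, Real.exp_add]
          ring
        rw [setIntegral_congr_fun measurableSet_Ioi hstep, MeasureTheory.integral_const_mul,
          mygamma hα (by linarith : (0:ℝ) < β + s)]
    _ = Real.Gamma α * ∫ s in Ioi (0:ℝ), exp (-(c * s)) * (s + β) ^ (-α) := by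
        rw [← MeasureTheory.integral_const_mul]
        apply setIntegral_congr_fun measurableSet_Ioi
        intro s hs
        dsimp only
        rw [add_comm β s]
        ring

lemma myIBP {α β c : ℝ} (hα : 0 < α) (hβ : 0 < β) (hc : 0 < c) :
    ∫ x in Ioi (0:ℝ), x ^ α * exp (-(β * x)) * ((x + c) ^ 2)⁻¹
      = (α + β * c) * (∫ x in Ioi (0:ℝ), x ^ (α - 1) * exp (-(β * x)) * (x + c)⁻¹)
        - β * (Real.Gamma α * β ^ (-α)) := by
  set f : ℝ → ℝ := fun x => x ^ α * (x + c)⁻¹ * exp (-(β * x)) with hf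
  set g : ℝ → ℝ := fun x =>
    (α + β * c) * (x ^ (α - 1) * exp (-(β * x)) * (x + c)⁻¹)
      - x ^ α * exp (-(β * x)) * ((x + c) ^ 2)⁻¹
      - β * (x ^ (α - 1) * exp (-(β * x))) with hg
  have hint1 := myint2 (by linarith : (-1:ℝ) < α - 1) hβ hc
  have hint3 := myint3 (by linarith : (-1:ℝ) < α) hβ hc
  have hint0 := myint (by linarith : (-1:ℝ) < α - 1) hβ
  have hgint : IntegrableOn g (Ioi 0) :=
    ((hint1.const_mul _).sub hint3).sub (hint0.const_mul β)
  have hderiv : ∀ x ∈ Ioi (0:ℝ), HasDerivAt f (g x) x := by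
    intro x hx
    have hx0 : (0:ℝ) < x := hx
    have hxc : (0:ℝ) < x + c := by linarith
    have h1 : HasDerivAt (fun y : ℝ => y ^ α) (α * x ^ (α - 1)) x :=
      Real.hasDerivAt_rpow_const (Or.inl hx0.ne')
    have h2 : HasDerivAt (fun y : ℝ => (y + c)⁻¹) (-1 / (x + c) ^ 2) x := by
      have := ((hasDerivAt_id x).add_const c).inv hxc.ne'
      simpa [Pi.inv_def] using this
    have h3 : HasDerivAt (fun y : ℝ => exp (-(β * y))) (exp (-(β * x)) * (-β)) x := by
      have hin : HasDerivAt (fun y : ℝ => -(β * y)) (-β) x := by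
        simpa [Pi.neg_def] using ((hasDerivAt_id x).const_mul β).neg
      exact hin.exp
    have h := (h1.mul h2).mul h3
    refine h.congr_deriv ?_
    rw [hg]
    dsimp only [Pi.mul_apply]
    have hxa : x ^ α = x ^ (α - 1) * x := by
      rw [← Real.rpow_add_one hx0.ne' (α - 1), sub_add_cancel]
    rw [hxa]
    field_simp
    ring
  have hcont : ContinuousWithinAt f (Ici 0) 0 := by
    apply ContinuousAt.continuousWithinAt
    have c1 : ContinuousAt (fun y : ℝ => y ^ α) 0 :=
      Real.continuousAt_rpow_const 0 α (Or.inr hα.le)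
    have c2 : ContinuousAt (fun y : ℝ => (y + c)⁻¹) 0 :=
      (continuousAt_id.add continuousAt_const).inv₀ (by simpa using hc.ne')
    have c3 : ContinuousAt (fun y : ℝ => exp (-(β * y))) 0 := by fun_prop
    exact (c1.mul c2).mul c3
  have htend : Tendsto f atTop (𝓝 0) := by
    have t1 : Tendsto (fun x : ℝ => x ^ α * exp (-(β * x))) atTop (𝓝 0) := by
      have := tendsto_rpow_mul_exp_neg_mul_atTop_nhds_zero α β hβ
      simpa [neg_mul] using this
    have t2 : Tendsto (fun x : ℝ => (x + c)⁻¹) atTop (𝓝 0) :=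
      tendsto_inv_atTop_zero.comp (tendsto_atTop_add_const_right _ c tendsto_id)
    have t3 := t1.mul t2
    rw [mul_zero] at t3
    exact t3.congr (fun x => by rw [hf]; ring)
  have key := integral_Ioi_of_hasDerivAt_of_tendsto hcont hderiv hgint htend
  have hf0 : f 0 = 0 := by rw [hf]; simp [Real.zero_rpow hα.ne']
  rw [hf0, sub_zero] at key
  have e1 : ∫ x in Ioi (0:ℝ), g x
      = (α + β * c) * (∫ x in Ioi (0:ℝ), x ^ (α - 1) * exp (-(β * x)) * (x + c)⁻¹)
        - (∫ x in Ioi (0:ℝ), x ^ α * exp (-(β * x)) * ((x + c) ^ 2)⁻¹)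
        - β * (Real.Gamma α * β ^ (-α)) := by
    have h1 : IntegrableOn
        (fun x : ℝ => (α + β * c) * (x ^ (α - 1) * exp (-(β * x)) * (x + c)⁻¹)) (Ioi 0) :=
      hint1.const_mul _
    calc ∫ x in Ioi (0:ℝ), g x
        = ∫ x in Ioi (0:ℝ), ((α + β * c) * (x ^ (α - 1) * exp (-(β * x)) * (x + c)⁻¹)
            - x ^ α * exp (-(β * x)) * ((x + c) ^ 2)⁻¹
            - β * (x ^ (α - 1) * exp (-(β * x)))) := rfl
      _ = _ := by
          have h13 : IntegrableOn (fun x : ℝ =>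
              (α + β * c) * (x ^ (α - 1) * exp (-(β * x)) * (x + c)⁻¹)
                - x ^ α * exp (-(β * x)) * ((x + c) ^ 2)⁻¹) (Ioi 0) := h1.sub hint3
          rw [integral_sub h13 (hint0.const_mul β)]
          rw [integral_sub h1 hint3,
            MeasureTheory.integral_const_mul, MeasureTheory.integral_const_mul,
            mygamma (by linarith : (0:ℝ) < α) hβ]
  rw [e1] at key
  linarith [key]

lemma rpow_alg {β c : ℝ} (hβ : 0 < β) (hc : 0 < c) (α E E' M : ℝ) (hE : E * E' = 1) :
    β ^ α * c ^ α * E * (β ^ (1 - α) * E' * ((β / c) ^ (α - 1) * M))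
      = β ^ α * c * M := by
  have h1 : (β / c) ^ (α - 1) = β ^ (α - 1) * c ^ (1 - α) := by
    rw [Real.div_rpow hβ.le hc.le, div_eq_mul_inv, ← Real.rpow_neg hc.le,
      show -(α - 1) = 1 - α by ring]
  rw [h1]
  have h2 : β ^ α * β ^ (1 - α) * β ^ (α - 1) = β ^ α := by
    rw [← Real.rpow_add hβ, ← Real.rpow_add hβ, show α + (1 - α) + (α - 1) = α by ring]
  have h3 : c ^ α * c ^ (1 - α) = c := by
    rw [← Real.rpow_add hc, show α + (1 - α) = 1 by ring, Real.rpow_one]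
  calc β ^ α * c ^ α * E * (β ^ (1 - α) * E' * (β ^ (α - 1) * c ^ (1 - α) * M))
      = (β ^ α * β ^ (1 - α) * β ^ (α - 1)) * (c ^ α * c ^ (1 - α)) * (E * E') * M := by ring
    _ = β ^ α * c * M := by rw [h2, h3, hE]; ring

end helpers

theorem expectation_X_div_shift_sq (a b c : ℝ) (ha : 0 < a) (hb : b < 0) (hc : 0 < c) :
    (∫ x in Set.Ioi (0 : ℝ), x / (x + c) ^ 2 * gDens a b x)
      = a / (2 * c) * psi a b c + b / 2 * (1 - psi a b c) := by
  have hα2 : (0:ℝ) < a / 2 := by linarith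
  have hβ2 : (0:ℝ) < -b / 2 := by linarith
  have hLHS : (∫ x in Set.Ioi (0 : ℝ), x / (x + c) ^ 2 * gDens a b x)
      = (Real.Gamma (a / 2))⁻¹ * (-b / 2) ^ (a / 2)
          * ∫ x in Ioi (0:ℝ), x ^ (a / 2) * exp (-(-b / 2 * x)) * ((x + c) ^ 2)⁻¹ := by
    rw [← MeasureTheory.integral_const_mul]
    apply setIntegral_congr_fun measurableSet_Ioi
    intro x hx
    have hx0 : (0:ℝ) < x := hx
    have hxc : (0:ℝ) < x + c := by linarith
    simp only [gDens]
    have hbx : Real.exp (b * x / 2) = Real.exp (-(-b / 2 * x)) := by congr 1; ring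
    have hxa : x ^ (a / 2 : ℝ) = x ^ (a / 2 - 1 : ℝ) * x := by
      rw [← Real.rpow_add_one hx0.ne', sub_add_cancel]
    rw [hbx, hxa]
    field_simp
  rw [hLHS, myIBP hα2 hβ2 hc, myI1 hα2 hβ2 hc]
  have hpsiM : psi a b c = (-b / 2) ^ (a / 2) * c
      * ∫ s in Ioi (0:ℝ), exp (-(c * s)) * (s + -b / 2) ^ (-(a / 2)) := by
    have hβc : -(b * c) / 2 = -b / 2 * c := by ring
    simp only [psi, hβc]
    rw [myuiGamma (α := a / 2) hβ2 hc, myJ (α := a / 2) hβ2 hc,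
      Real.mul_rpow hβ2.le hc.le]
    exact rpow_alg hβ2 hc _ _ _ _ (by rw [← Real.exp_add]; simp)
  rw [hpsiM]
  have hΓ : Real.Gamma (a / 2) ≠ 0 := (Real.Gamma_pos_of_pos hα2).ne'
  have hP : ((-b / 2 : ℝ)) ^ (a / 2) ≠ 0 := (Real.rpow_pos_of_pos hβ2 _).ne'
  rw [Real.rpow_neg hβ2.le]
  field_simp
  have hP' : (-(b / 2)) ^ (a / 2) ≠ 0 := by rwa [neg_div] at hP
  field_simp
  ring
end

section
/- Let a > 0, b < 0, c > 0, and let X ~ Gamma(a/2, −b/2). Then E[X²/(X+c)²] = ((a+2−bc)(1 − ψ_c) − a)/2, where ψ_c = (−bc/2)^{a/2} e^{−bc/2} Γ(1−a/2, −bc/2). -/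
set_option maxHeartbeats 1000000

open Real Set MeasureTheory Filter

noncomputable def bse (α lam x : ℝ) : ℝ := x ^ (α - 1) * Real.exp (-(lam * x))

lemma bse_integrable (hα : 0 < α) (hlam : 0 < lam) :
    IntegrableOn (fun x => bse α lam x) (Ioi 0) := by
  have h := Real.GammaIntegral_convergent hα
  have h2 : IntegrableOn (fun x => Real.exp (-(lam * x)) * (lam * x) ^ (α - 1)) (Ioi 0) := by
    have := (integrableOn_Ioi_comp_mul_left_iff
      (fun x => Real.exp (-x) * x ^ (α - 1)) 0 hlam).mpr (by simpa [mul_zero] using h)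
    simpa [mul_zero] using this
  have h4 : IntegrableOn (fun x => ((lam:ℝ) ^ (α-1))⁻¹ * (Real.exp (-(lam * x)) * (lam * x) ^ (α - 1))) (Ioi 0) :=
    h2.const_mul ((lam:ℝ) ^ (α-1))⁻¹
  apply IntegrableOn.congr_fun h4 ?_ measurableSet_Ioi
  intro x hx
  simp only [bse]
  rw [Real.mul_rpow hlam.le (le_of_lt hx)]
  field_simp

lemma bse_integral (hα : 0 < α) (hlam : 0 < lam) :
    ∫ x in Ioi 0, bse α lam x = (1/lam) ^ α * Real.Gamma α :=
  Real.integral_rpow_mul_exp_neg_mul_Ioi hα hlam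

lemma bse_nonneg (x : ℝ) (hx : 0 ≤ x) : 0 ≤ bse α lam x := by
  unfold bse; positivity

lemma bse_contOn : ContinuousOn (fun x => bse α lam x) (Ioi 0) := by
  unfold bse
  apply ContinuousOn.mul
  · exact fun x hx => ((Real.continuousAt_rpow_const x _ (Or.inl (ne_of_gt hx))).continuousWithinAt)
  · exact (Real.continuous_exp.comp (continuous_const.mul continuous_id).neg).continuousOn

lemma contOn_div (k : ℕ) (hc : 0 < c) :
    ContinuousOn (fun x => bse α lam x / (x + c) ^ k) (Ioi 0) := by
  apply bse_contOn.div
  · exact ((continuous_id.add continuous_const).pow k).continuousOn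
  · intro x hx
    have hx : (0:ℝ) < x := hx
    positivity

lemma int_div (hα : 0 < α) (hlam : 0 < lam) (hc : 0 < c) (k : ℕ) :
    IntegrableOn (fun x => bse α lam x / (x + c) ^ k) (Ioi 0) := by
  apply Integrable.mono' ((bse_integrable hα hlam).mul_const ((c ^ k)⁻¹))
    ((contOn_div k hc).aestronglyMeasurable measurableSet_Ioi)
  filter_upwards [self_mem_ae_restrict measurableSet_Ioi] with x hx
  have hx : (0:ℝ) < x := hx
  have h1 : 0 ≤ bse α lam x := bse_nonneg x hx.le
  have h2 : (c:ℝ) ^ k ≤ (x + c) ^ k := pow_le_pow_left₀ hc.le (by linarith) k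
  rw [Real.norm_eq_abs, abs_of_nonneg (div_nonneg h1 (by positivity)), div_eq_mul_inv]
  exact mul_le_mul_of_nonneg_left (inv_anti₀ (by positivity) h2) h1

/-- The integration-by-parts identity:
`0 = -lam * K + (lam*c + α - 1) * G1 + c * G2`. -/
lemma int_div1 (hα : 0 < α) (hlam : 0 < lam) (hc : 0 < c) :
    IntegrableOn (fun x => bse α lam x / (x + c)) (Ioi 0) := by
  have h := int_div hα hlam hc 1; simpa [pow_one] using h

lemma ibp_identity (hα : 0 < α) (hlam : 0 < lam) (hc : 0 < c) :
    0 = -lam * ((1/lam) ^ α * Real.Gamma α)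
      + ((lam * c + α - 1) * ∫ x in Ioi 0, bse α lam x / (x + c))
      + c * ∫ x in Ioi 0, bse α lam x / (x + c) ^ 2 := by
  set g : ℝ → ℝ := fun x => x ^ α * Real.exp (-(lam * x)) * (x + c)⁻¹ with hg
  set g' : ℝ → ℝ := fun x => -lam * bse α lam x
      + ((lam * c + α - 1) * (bse α lam x / (x + c)) + c * (bse α lam x / (x + c) ^ 2)) with hg'
  have hderiv : ∀ x ∈ Ioi (0:ℝ), HasDerivAt g (g' x) x := by
    intro x hx
    have hx : (0:ℝ) < x := hx
    have hxc : x + c ≠ 0 := by positivity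
    have h1 : HasDerivAt (fun y : ℝ => y ^ α) (α * x ^ (α - 1)) x :=
      Real.hasDerivAt_rpow_const (Or.inl hx.ne')
    have h2 : HasDerivAt (fun y : ℝ => Real.exp (-(lam * y)))
        (Real.exp (-(lam * x)) * -lam) x := by
      have := (((hasDerivAt_id x).const_mul lam).neg).exp
      simpa using this
    have h3 : HasDerivAt (fun y : ℝ => (y + c)⁻¹) (-1 / (x + c) ^ 2) x :=
      ((hasDerivAt_id x).add_const c).inv hxc
    have h := (h1.mul h2).mul h3
    refine h.congr_deriv (Eq.symm ?_)
    have hxa : x ^ α = x ^ (α - 1) * x := by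
      rw [show α = α - 1 + 1 by ring, Real.rpow_add_one hx.ne']; ring_nf
    simp only [hg', bse, hxa, Pi.mul_apply]
    field_simp
    ring
  have h1 : IntegrableOn (fun x => -lam * bse α lam x) (Ioi 0) :=
    (bse_integrable hα hlam).const_mul _
  have h2a : IntegrableOn (fun x => (lam * c + α - 1) * (bse α lam x / (x + c))) (Ioi 0) :=
    (int_div1 hα hlam hc).const_mul _
  have h2b : IntegrableOn (fun x => c * (bse α lam x / (x + c) ^ 2)) (Ioi 0) :=
    (int_div hα hlam hc 2).const_mul _
  have h2 : IntegrableOn (fun x => (lam * c + α - 1) * (bse α lam x / (x + c))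
      + c * (bse α lam x / (x + c) ^ 2)) (Ioi 0) := h2a.add h2b
  have hint : IntegrableOn g' (Ioi 0) := h1.add h2
  have hcont : ContinuousWithinAt g (Ici 0) 0 := by
    apply ContinuousWithinAt.mul
    apply ContinuousWithinAt.mul
    · exact (Real.continuousAt_rpow_const 0 α (Or.inr hα.le)).continuousWithinAt
    · exact ((Real.continuous_exp.comp (continuous_const.mul continuous_id).neg).continuousAt).continuousWithinAt
    · exact (((continuous_id.add continuous_const).continuousAt).inv₀
        (by simpa using hc.ne')).continuousWithinAt
  have htop : Filter.Tendsto g atTop (nhds 0) := by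
    have hb := tendsto_rpow_mul_exp_neg_mul_atTop_nhds_zero (α - 1) lam hlam
    apply squeeze_zero' (g := fun x => x ^ (α-1) * Real.exp (-lam * x))
    · filter_upwards [Filter.eventually_gt_atTop (0:ℝ)] with x hx
      have : (0:ℝ) < x + c := by linarith
      simp only [hg]; positivity
    · filter_upwards [Filter.eventually_gt_atTop (0:ℝ)] with x hx
      have hxa : x ^ α = x ^ (α - 1) * x := by
        rw [show α = α - 1 + 1 by ring, Real.rpow_add_one hx.ne']; ring_nf
      simp only [hg, neg_mul]
      have e1 : x ^ α * Real.exp (-(lam*x)) * (x+c)⁻¹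
          = (x ^ (α-1) * Real.exp (-(lam*x))) * (x * (x+c)⁻¹) := by rw [hxa]; ring
      rw [e1]
      have h5 : x * (x+c)⁻¹ ≤ 1 := by
        rw [← div_eq_mul_inv]
        exact (div_le_one (by linarith)).mpr (by linarith)
      exact mul_le_of_le_one_right (by positivity) h5
    · exact hb
  have key := integral_Ioi_of_hasDerivAt_of_tendsto hcont hderiv hint htop
  have hg0 : g 0 = 0 := by
    simp only [hg]
    rw [Real.zero_rpow hα.ne']
    ring
  rw [hg0, sub_zero] at key
  -- key : ∫ x in Ioi 0, g' x = 0
  have split : ∫ x in Ioi 0, g' x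
      = -lam * ((1/lam) ^ α * Real.Gamma α)
      + ((lam * c + α - 1) * ∫ x in Ioi 0, bse α lam x / (x + c))
      + c * ∫ x in Ioi 0, bse α lam x / (x + c) ^ 2 := by
    simp only [hg']
    rw [integral_add h1 h2, integral_add h2a h2b,
      integral_const_mul, integral_const_mul, integral_const_mul, bse_integral hα hlam]
    ring
  rw [split] at key
  linarith [key]

open Metric in
lemma G1_hasDeriv (hα : 0 < α) (hlam : 0 < lam) (hc : 0 < c) :
    HasDerivAt (fun y => ∫ x in Ioi 0, bse α lam x / (x + y))
      (-∫ x in Ioi 0, bse α lam x / (x + c) ^ 2) c := by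
  have hε : (0:ℝ) < c / 2 := by linarith
  have key := hasDerivAt_integral_of_dominated_loc_of_deriv_le (μ := volume.restrict (Ioi 0))
    (F := fun y x => bse α lam x / (x + y))
    (F' := fun y x => -(bse α lam x / (x + y) ^ 2))
    (x₀ := c) (s := ball c (c / 2)) (bound := fun x => bse α lam x * ((c/2) ^ 2)⁻¹) (ball_mem_nhds c hε)
    ?_ ?_ ?_ ?_ ?_ ?_
  · have h2 : (∫ x in Ioi 0, -(bse α lam x / (x + c) ^ 2))
        = -∫ x in Ioi 0, bse α lam x / (x + c) ^ 2 := integral_neg _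
    rw [h2] at key
    exact key.2
  · filter_upwards [eventually_gt_nhds (by linarith : c/2 < c)] with y hy
    exact ((bse_contOn.div ((continuous_id.add continuous_const).continuousOn)
      (fun x hx => by
        have hx' : (0:ℝ) < x := hx
        exact ne_of_gt (by simp only [Pi.add_apply, id_eq]; linarith))).aestronglyMeasurable measurableSet_Ioi)
  · exact int_div1 hα hlam hc
  · exact ((contOn_div 2 hc).neg.aestronglyMeasurable measurableSet_Ioi)
  · filter_upwards [self_mem_ae_restrict measurableSet_Ioi] with x hx y hy
    have hx : (0:ℝ) < x := hx
    have hy' : c / 2 < y := by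
      have := abs_lt.mp (mem_ball_iff_norm.mp hy)
      linarith [this.1]
    have hb : 0 ≤ bse α lam x := bse_nonneg x hx.le
    rw [norm_neg, Real.norm_eq_abs, abs_of_nonneg (by positivity)]
    have h2 : ((c:ℝ)/2) ^ 2 ≤ (x + y) ^ 2 := by nlinarith
    rw [div_eq_mul_inv]
    exact mul_le_mul_of_nonneg_left (inv_anti₀ (by positivity) h2) hb
  · exact (bse_integrable hα hlam).mul_const _
  · filter_upwards [self_mem_ae_restrict measurableSet_Ioi] with x hx y hy
    have hx : (0:ℝ) < x := hx
    have hy' : c / 2 < y := by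
      have := abs_lt.mp (mem_ball_iff_norm.mp hy)
      linarith [this.1]
    have hxy : x + y ≠ 0 := ne_of_gt (by linarith)
    have h3 : HasDerivAt (fun y : ℝ => (x + y)⁻¹) (-1 / (x + y) ^ 2) y :=
      ((hasDerivAt_id y).const_add x).inv hxy
    have h4 : HasDerivAt (fun z : ℝ => bse α lam x / (x + z))
        (bse α lam x * (-1 / (x + y) ^ 2)) y := by
      simpa [div_eq_mul_inv] using h3.const_mul (bse α lam x)
    refine h4.congr_deriv ?_
    ring

variable {β y : ℝ}

lemma uiG_integrable (hy : 0 < y) (hβ : β ≤ 1) :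
    IntegrableOn (fun t => Real.exp (-t) * t ^ (β - 1)) (Ioi y) := by
  have hbd : IntegrableOn (fun t => Real.exp (-t) * y ^ (β - 1)) (Ioi y) := by
    have h : IntegrableOn (fun t => Real.exp (-1 * t) * y ^ (β - 1)) (Ioi y) :=
      (exp_neg_integrableOn_Ioi y (zero_lt_one)).mul_const ((y:ℝ) ^ (β - 1))
    exact h.congr_fun (fun t _ => by norm_num) measurableSet_Ioi
  apply Integrable.mono' hbd
  · apply ContinuousOn.aestronglyMeasurable ?_ measurableSet_Ioi
    apply ContinuousOn.mul
    · exact (Real.continuous_exp.comp continuous_neg).continuousOn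
    · exact fun t ht => (Real.continuousAt_rpow_const t _
        (Or.inl (ne_of_gt (lt_trans hy ht)))).continuousWithinAt
  · filter_upwards [self_mem_ae_restrict measurableSet_Ioi] with t ht
    have hty : y < t := ht
    have ht0 : 0 < t := lt_trans hy hty
    rw [Real.norm_eq_abs, abs_of_nonneg (by positivity)]
    exact mul_le_mul_of_nonneg_left
      (Real.rpow_le_rpow_of_nonpos hy hty.le (by linarith)) (Real.exp_pos _).le

lemma uiG_nonneg (hy : 0 < y) : 0 ≤ uiGamma β y := by
  apply setIntegral_nonneg measurableSet_Ioi
  intro t ht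
  have : (0:ℝ) < t := lt_trans hy ht
  positivity

lemma uiG_le (hy : 0 < y) (hβ : β ≤ 1) : uiGamma β y ≤ y ^ (β - 1) * Real.exp (-y) := by
  have h1 : uiGamma β y ≤ ∫ t in Ioi y, Real.exp (-t) * y ^ (β - 1) := by
    have hbd : IntegrableOn (fun t => Real.exp (-t) * y ^ (β - 1)) (Ioi y) := by
      have h : IntegrableOn (fun t => Real.exp (-1 * t) * y ^ (β - 1)) (Ioi y) :=
        (exp_neg_integrableOn_Ioi y (zero_lt_one)).mul_const ((y:ℝ) ^ (β - 1))
      exact h.congr_fun (fun t _ => by norm_num) measurableSet_Ioi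
    apply setIntegral_mono_on (uiG_integrable hy hβ) hbd measurableSet_Ioi
    intro t ht
    have hty : y < t := ht
    exact mul_le_mul_of_nonneg_left
      (Real.rpow_le_rpow_of_nonpos hy hty.le (by linarith)) (Real.exp_pos _).le
  calc uiGamma β y ≤ ∫ t in Ioi y, Real.exp (-t) * y ^ (β - 1) := h1
    _ = y ^ (β - 1) * Real.exp (-y) := by
        rw [integral_mul_const, integral_exp_neg_Ioi]; ring

lemma uiG_hasDeriv (hy : 0 < y) (hβ : β ≤ 1) :
    HasDerivAt (uiGamma β) (-(Real.exp (-y) * y ^ (β - 1))) y := by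
  set f : ℝ → ℝ := fun t => Real.exp (-t) * t ^ (β - 1) with hf
  have hmemA : Ioi (y/2) ∈ nhds y := Ioi_mem_nhds (by linarith)
  have heq : ∀ q ∈ Ioi (y/2), uiGamma β q
      = uiGamma β (y/2) - ∫ t in (y/2)..q, f t := by
    intro q hq
    have hq : y/2 < q := hq
    have hsplit : Ioi (y/2) = Ioc (y/2) q ∪ Ioi q := by
      rw [Ioc_union_Ioi_eq_Ioi hq.le]
    have hdisj : Disjoint (Ioc (y/2) q) (Ioi q) := by
      apply Ioc_disjoint_Ioi le_rfl
    have hint := uiG_integrable (by linarith : (0:ℝ) < y/2) hβ (β := β)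
    have h2 : ∫ t in Ioi (y/2), f t
        = (∫ t in Ioc (y/2) q, f t) + ∫ t in Ioi q, f t := by
      rw [hsplit] at hint ⊢
      exact setIntegral_union hdisj measurableSet_Ioi
        (hint.mono_set subset_union_left) (hint.mono_set subset_union_right)
    have h3 : ∫ t in (y/2)..q, f t = ∫ t in Ioc (y/2) q, f t :=
      intervalIntegral.integral_of_le hq.le
    simp only [uiGamma] at *
    rw [h3]
    linarith [h2]
  have hmeas : StronglyMeasurableAtFilter f (nhds y) volume := by
    refine ⟨Ioi 0, Ioi_mem_nhds hy, ?_⟩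
    apply ContinuousOn.aestronglyMeasurable ?_ measurableSet_Ioi
    apply ContinuousOn.mul
    · exact (Real.continuous_exp.comp continuous_neg).continuousOn
    · exact fun t ht => (Real.continuousAt_rpow_const t _
        (Or.inl (ne_of_gt ht))).continuousWithinAt
  have hcont : ContinuousAt f y := by
    apply ContinuousAt.mul
    · exact Real.continuous_exp.comp continuous_neg |>.continuousAt
    · exact Real.continuousAt_rpow_const y _ (Or.inl hy.ne')
  have hii : IntervalIntegrable f volume (y/2) y := by
    apply ContinuousOn.intervalIntegrable
    intro t ht
    have h1 : y/2 ≤ t := by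
      rcases ht with ⟨h, _⟩
      simpa [min_eq_left (by linarith : y/2 ≤ y)] using h
    have ht0 : 0 < t := by linarith
    exact (((Real.continuous_exp.comp continuous_neg).continuousAt.mul
      (Real.continuousAt_rpow_const t _ (Or.inl ht0.ne')))).continuousWithinAt
  have hd : HasDerivAt (fun q => uiGamma β (y/2) - ∫ t in (y/2)..q, f t) (-(f y)) y := by
    have := (intervalIntegral.integral_hasDerivAt_right hii hmeas hcont)
    simpa using (this.const_sub (uiGamma β (y/2)))
  apply hd.congr_of_eventuallyEq ?_
  filter_upwards [hmemA] with q hq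
  exact heq q hq

lemma G1_nonneg (hy : 0 < y) : 0 ≤ ∫ x in Ioi 0, bse α lam x / (x + y) :=
  setIntegral_nonneg measurableSet_Ioi
    (fun x hx => div_nonneg (bse_nonneg x (le_of_lt hx)) (by
      have : (0:ℝ) < x := hx; linarith))

lemma G1_le (hα : 0 < α) (hlam : 0 < lam) (hy : 0 < y) :
    (∫ x in Ioi 0, bse α lam x / (x + y)) ≤ ((1/lam) ^ α * Real.Gamma α) * y⁻¹ := by
  have h1 : ∀ x ∈ Ioi (0:ℝ), bse α lam x / (x + y) ≤ bse α lam x * y⁻¹ := by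
    intro x hx
    have hx : (0:ℝ) < x := hx
    rw [div_eq_mul_inv]
    exact mul_le_mul_of_nonneg_left (inv_anti₀ hy (by linarith)) (bse_nonneg x hx.le)
  calc (∫ x in Ioi 0, bse α lam x / (x + y))
      ≤ ∫ x in Ioi 0, bse α lam x * y⁻¹ :=
        setIntegral_mono_on (int_div1 hα hlam hy) ((bse_integrable hα hlam).mul_const _)
          measurableSet_Ioi h1
    _ = ((1/lam) ^ α * Real.Gamma α) * y⁻¹ := by
        rw [integral_mul_const, bse_integral hα hlam]

lemma D_hasDeriv (hα : 0 < α) (hlam : 0 < lam) (hy : 0 < y) :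
    HasDerivAt (fun y => Real.exp (-(lam*y)) * y ^ (1-α)
        * (∫ x in Ioi 0, bse α lam x / (x + y))
      - Real.Gamma α * uiGamma (1-α) (lam*y)) 0 y := by
  have hG1d := G1_hasDeriv hα hlam hy
  have hexp : HasDerivAt (fun y : ℝ => Real.exp (-(lam * y)))
      (Real.exp (-(lam * y)) * -lam) y := by
    simpa using (((hasDerivAt_id y).const_mul lam).neg).exp
  have hpow : HasDerivAt (fun y : ℝ => y ^ (1-α)) ((1-α) * y ^ (1-α-1)) y :=
    Real.hasDerivAt_rpow_const (Or.inl hy.ne')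
  have hA := hexp.mul hpow
  have hAB := (hA.mul hG1d)
  have hu : HasDerivAt (uiGamma (1-α)) (-(Real.exp (-(lam*y)) * (lam*y) ^ ((1-α) - 1)))
      (lam*y) := uiG_hasDeriv (by positivity) (by linarith)
  have hmul : HasDerivAt (fun y : ℝ => lam * y) lam y := by
    simpa using (hasDerivAt_id y).const_mul lam
  have hU : HasDerivAt (fun y => uiGamma (1-α) (lam*y))
      (-(Real.exp (-(lam*y)) * (lam*y) ^ ((1-α) - 1)) * lam) y := by
    exact HasDerivAt.comp y hu hmul
  have total := hAB.sub (hU.const_mul (Real.Gamma α))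
  refine total.congr_deriv (Eq.symm ?_)
  -- algebra
  have hibp := ibp_identity hα hlam hy (c := y)
  have h1 : y ^ (1-α) = y ^ (-α:ℝ) * y := by
    rw [show (1-α) = -α + 1 by ring, Real.rpow_add_one hy.ne']
  have h2 : y ^ (1-α-1) = y ^ (-α:ℝ) := by rw [show (1-α-1) = -α by ring]
  have h3 : (lam*y) ^ ((1-α)-1) = lam ^ (-α:ℝ) * y ^ (-α:ℝ) := by
    rw [show ((1-α)-1) = -α by ring, Real.mul_rpow hlam.le hy.le]
  have h4 : (1/lam) ^ α = lam ^ (-α:ℝ) := by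
    rw [one_div, Real.rpow_neg hlam.le, ← Real.inv_rpow hlam.le]
  rw [h4] at hibp
  rw [Pi.mul_apply, h1, h2, h3]
  linear_combination (-(Real.exp (-(lam*y)) * y ^ (-α:ℝ))) * hibp

lemma G1_formula (hα : 0 < α) (hlam : 0 < lam) (hc : 0 < c) :
    ∫ x in Ioi 0, bse α lam x / (x + c)
      = Real.Gamma α * c ^ (α-1) * Real.exp (lam*c) * uiGamma (1-α) (lam*c) := by
  set D : ℝ → ℝ := fun y => Real.exp (-(lam*y)) * y ^ (1-α)
      * (∫ x in Ioi 0, bse α lam x / (x + y))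
      - Real.Gamma α * uiGamma (1-α) (lam*y) with hD
  have hderiv : ∀ t ∈ Set.uIcc c c, True := fun _ _ => trivial
  have hconst : ∀ y, 0 < y → D y = D c := by
    intro y hy
    have h := intervalIntegral.integral_eq_sub_of_hasDerivAt (f := D) (f' := fun _ => (0:ℝ))
      (a := c) (b := y) ?_ (intervalIntegrable_const)
    · have h2 : D y - D c = 0 := by simpa using h.symm
      linarith
    · intro t ht
      have ht0 : 0 < t := by
        rcases ht with ⟨h1, _⟩
        have := le_min hc.le hy.le  -- no
        calc (0:ℝ) < min c y := lt_min hc hy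
          _ ≤ t := h1
      exact D_hasDeriv hα hlam ht0
  have hlim : Filter.Tendsto D atTop (nhds 0) := by
    have hT1 : Filter.Tendsto (fun y => Real.exp (-(lam*y)) * y ^ (1-α)
        * (∫ x in Ioi 0, bse α lam x / (x + y))) atTop (nhds 0) := by
      apply squeeze_zero'
      · filter_upwards [Filter.eventually_gt_atTop (0:ℝ)] with y hy
        have := G1_nonneg (α := α) (lam := lam) hy
        positivity
      · filter_upwards [Filter.eventually_gt_atTop (0:ℝ)] with y hy
        have hle := G1_le hα hlam hy
        have h1 : y ^ (1-α) = y ^ (-α:ℝ) * y := by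
          rw [show (1-α) = -α + 1 by ring, Real.rpow_add_one hy.ne']
        calc Real.exp (-(lam*y)) * y ^ (1-α) * (∫ x in Ioi 0, bse α lam x / (x + y))
            ≤ Real.exp (-(lam*y)) * y ^ (1-α) * (((1/lam) ^ α * Real.Gamma α) * y⁻¹) := by
              apply mul_le_mul_of_nonneg_left hle (by positivity)
          _ = ((1/lam) ^ α * Real.Gamma α) * (y ^ (-α:ℝ) * Real.exp (-lam*y)) := by
              rw [h1, neg_mul]
              field_simp
      · have h := Filter.Tendsto.const_mul ((1/lam) ^ α * Real.Gamma α)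
          (tendsto_rpow_mul_exp_neg_mul_atTop_nhds_zero (-α) lam hlam)
        rw [mul_zero] at h
        exact h
    have hT2 : Filter.Tendsto (fun y => Real.Gamma α * uiGamma (1-α) (lam*y)) atTop (nhds 0) := by
      have h0 := tendsto_rpow_mul_exp_neg_mul_atTop_nhds_zero (-α) 1 one_pos
      have hcomp : Filter.Tendsto (fun y : ℝ => lam * y) atTop atTop :=
        Filter.Tendsto.const_mul_atTop hlam tendsto_id
      have h1 := Filter.Tendsto.const_mul (Real.Gamma α) (h0.comp hcomp)
      rw [mul_zero] at h1
      have h2 : Filter.Tendsto (fun y => Real.Gamma α * ((lam*y) ^ (-α:ℝ) * Real.exp (-(lam*y))))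
          atTop (nhds 0) := by
        apply h1.congr
        intro y
        simp [Function.comp, neg_one_mul]
      apply squeeze_zero' ?_ ?_ h2
      · filter_upwards [Filter.eventually_gt_atTop (0:ℝ)] with y hy
        exact mul_nonneg (Real.Gamma_nonneg_of_nonneg hα.le) (uiG_nonneg (by positivity))
      · filter_upwards [Filter.eventually_gt_atTop (0:ℝ)] with y hy
        have hb := uiG_le (y := lam*y) (β := 1-α) (by positivity) (by linarith)
        calc Real.Gamma α * uiGamma (1-α) (lam*y)
            ≤ Real.Gamma α * ((lam*y) ^ ((1-α)-1) * Real.exp (-(lam*y))) :=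
              mul_le_mul_of_nonneg_left hb (Real.Gamma_nonneg_of_nonneg hα.le)
          _ = Real.Gamma α * ((lam*y) ^ (-α:ℝ) * Real.exp (-(lam*y))) := by
              rw [show ((1-α)-1) = -α by ring]
    have := hT1.sub hT2
    simpa using this
  have hDc : D c = 0 := by
    have h1 : Filter.Tendsto D atTop (nhds (D c)) := by
      apply Filter.Tendsto.congr' ?_ (tendsto_const_nhds (x := D c))
      filter_upwards [Filter.eventually_gt_atTop (0:ℝ)] with y hy
      exact (hconst y hy).symm
    exact tendsto_nhds_unique h1 hlim
  have hexp : Real.exp (-(lam*c)) ≠ 0 := (Real.exp_pos _).ne'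
  have hrc : c ^ (1-α) ≠ 0 := by positivity
  simp only [hD] at hDc
  have hsolve : (∫ x in Ioi 0, bse α lam x / (x + c))
      = Real.Gamma α * uiGamma (1-α) (lam*c) / (Real.exp (-(lam*c)) * c ^ (1-α)) := by
    field_simp at hDc ⊢
    linarith [hDc]
  rw [hsolve]
  rw [Real.exp_neg, div_eq_mul_inv]
  have h5 : c ^ (α-1) = (c ^ (1-α))⁻¹ := by
    rw [← Real.rpow_neg hc.le, show -(1-α) = α-1 by ring]
  rw [h5]
  field_simp

lemma main_aux (hα : 0 < α) (hlam : 0 < lam) (hc : 0 < c) :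
    (∫ x in Ioi 0, x^2/(x+c)^2 * ((Real.Gamma α)⁻¹ * lam^α * bse α lam x))
      = 1 + lam*c - (α+1+lam*c) * ((lam*c) ^ α * Real.exp (lam*c) * uiGamma (1-α) (lam*c)) := by
  have hΓ : (0:ℝ) < Real.Gamma α := Real.Gamma_pos_of_pos hα
  have hpt : EqOn (fun x => x^2/(x+c)^2 * ((Real.Gamma α)⁻¹ * lam^α * bse α lam x))
      (fun x => (Real.Gamma α)⁻¹ * lam^α * (bse α lam x - 2*c*(bse α lam x/(x+c))
        + c^2*(bse α lam x/(x+c)^2))) (Ioi 0) := by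
    intro x hx
    have hx : (0:ℝ) < x := hx
    have hxc : x + c ≠ 0 := by positivity
    simp only
    field_simp
    ring
  rw [setIntegral_congr_fun measurableSet_Ioi hpt]
  have hA := bse_integrable hα hlam
  have hB : IntegrableOn (fun x => 2*c*(bse α lam x/(x+c))) (Ioi 0) :=
    (int_div1 hα hlam hc).const_mul _
  have hC : IntegrableOn (fun x => c^2*(bse α lam x/(x+c)^2)) (Ioi 0) :=
    (int_div hα hlam hc 2).const_mul _
  have hAB : IntegrableOn (fun x => bse α lam x - 2*c*(bse α lam x/(x+c))) (Ioi 0) := hA.sub hB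
  rw [integral_const_mul, integral_add hAB hC, integral_sub hA hB, integral_const_mul,
    integral_const_mul, bse_integral hα hlam, G1_formula hα hlam hc]
  have hibp := ibp_identity hα hlam hc
  rw [G1_formula hα hlam hc] at hibp
  set Φ := uiGamma (1-α) (lam*c) with hΦ
  set G2 := ∫ x in Ioi 0, bse α lam x / (x+c)^2 with hG2def
  have hG2 : G2 = (lam * ((1/lam)^α * Real.Gamma α)
      - (lam*c+α-1)*(Real.Gamma α * c^(α-1) * Real.exp (lam*c) * Φ))/c := by
    field_simp at hibp ⊢
    linarith
  rw [hG2]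
  have r1 : ((1:ℝ)/lam) ^ α = (lam ^ α)⁻¹ := by
    rw [one_div, Real.inv_rpow hlam.le]
  have r2 : c ^ (α-1) = c ^ α * c⁻¹ := by
    rw [Real.rpow_sub hc, Real.rpow_one, div_eq_mul_inv]
  have r3 : (lam*c) ^ α = lam ^ α * c ^ α := Real.mul_rpow hlam.le hc.le
  rw [r1, r2, r3]
  have hlamα : (0:ℝ) < lam ^ α := Real.rpow_pos_of_pos hlam α
  have hcα : (0:ℝ) < c ^ α := Real.rpow_pos_of_pos hc α
  field_simp
  ring

theorem expectation_sq_div_shift_sq (a b c : ℝ) (ha : 0 < a) (hb : b < 0) (hc : 0 < c) :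
    (∫ x in Set.Ioi (0 : ℝ), x ^ 2 / (x + c) ^ 2 * gDens a b x)
      = ((a + 2 - b * c) * (1 - psi a b c) - a) / 2 := by
  have hα : 0 < a/2 := by linarith
  have hlam : 0 < -b/2 := by linarith
  have hpt : EqOn (fun x => x^2/(x+c)^2 * gDens a b x)
      (fun x => x^2/(x+c)^2 * ((Real.Gamma (a/2))⁻¹ * (-b/2)^(a/2) * bse (a/2) (-b/2) x))
      (Ioi 0) := by
    intro x hx
    simp only [gDens, bse]
    rw [show b*x/2 = -(-b/2*x) by ring]
    ring
  rw [setIntegral_congr_fun measurableSet_Ioi hpt, main_aux hα hlam hc]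
  have hbc : -(b*c)/2 = -b/2*c := by ring
  simp only [psi, hbc]
  ring
end

section
/- Let a > 0, b < 0, c > 0, and let X ~ Gamma(a/2, −b/2); set C = X + c. Then E[C] · E[1/C] − 1 = ψ_c (1 − a/(bc)) − 1, where ψ_c = (−bc/2)^{a/2} e^{−bc/2} Γ(1−a/2, −bc/2). Moreover this quantity is strictly positive. -/
open Real Set

section auxiliary

open MeasureTheory Function

/-- generic Gamma density with shape `α`, rate `lam` -/
noncomputable def gd (α lam x : ℝ) : ℝ :=
  (Real.Gamma α)⁻¹ * lam ^ α * x ^ (α - 1) * Real.exp (-(lam * x))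

lemma meas_gd {α lam : ℝ} : Measurable (gd α lam) := by
  unfold gd; fun_prop

lemma integral_exp_neg_mul_Ioi_zero {r : ℝ} (hr : 0 < r) :
    ∫ s in Ioi (0:ℝ), Real.exp (-(r * s)) = r⁻¹ := by
  have := MeasureTheory.integral_comp_mul_left_Ioi (fun x => Real.exp (-x)) 0 hr
  simp only [mul_zero, neg_zero, Real.exp_zero, smul_eq_mul] at this
  rw [this, integral_exp_neg_Ioi]; simp

lemma integral_Ioi_comp_add_right (f : ℝ → ℝ) (a d : ℝ) :
    ∫ x in Ioi a, f (x + d) = ∫ x in Ioi (a + d), f x := by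
  rw [← integral_indicator measurableSet_Ioi, ← integral_indicator measurableSet_Ioi,
    ← integral_add_right_eq_self ((Ioi (a + d)).indicator f) d]
  congr 1
  ext x
  by_cases h : a < x
  · rw [indicator_of_mem (by exact h), indicator_of_mem (by simpa using h)]
  · rw [indicator_of_notMem (by exact h), indicator_of_notMem (by simpa using h)]

lemma intOn_rpow_exp {s r : ℝ} (hs : -1 < s) (hr : 0 < r) :
    IntegrableOn (fun x : ℝ => x ^ s * Real.exp (-(r * x))) (Ioi 0) := by
  have := integrableOn_rpow_mul_exp_neg_mul_rpow (p := 1) hs one_pos hr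
  simpa [Real.rpow_one, neg_mul] using this

variable {α lam c : ℝ} (hα : 0 < α) (hlam : 0 < lam) (hc : 0 < c)

include hα hlam

lemma gd_nonneg {x : ℝ} (hx : 0 < x) : 0 ≤ gd α lam x := by
  unfold gd
  have := Real.exp_pos (-(lam * x))
  have h2 : (0:ℝ) ≤ x ^ (α - 1) := Real.rpow_nonneg hx.le _
  have h3 : (0:ℝ) ≤ lam ^ α := Real.rpow_nonneg hlam.le _
  have h4 : (0:ℝ) ≤ (Real.Gamma α)⁻¹ := inv_nonneg.mpr (Real.Gamma_nonneg_of_nonneg hα.le)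
  positivity

lemma gd_pos {x : ℝ} (hx : 0 < x) : 0 < gd α lam x := by
  unfold gd
  have := Real.exp_pos (-(lam * x))
  have h2 : (0:ℝ) < x ^ (α - 1) := Real.rpow_pos_of_pos hx _
  have h3 : (0:ℝ) < lam ^ α := Real.rpow_pos_of_pos hlam _
  have h4 : (0:ℝ) < (Real.Gamma α)⁻¹ := inv_pos.mpr (Real.Gamma_pos_of_pos hα)
  positivity

lemma integrable_gd : IntegrableOn (gd α lam) (Ioi 0) := by
  have h := (intOn_rpow_exp (show (-1:ℝ) < α - 1 by linarith) hlam).const_mul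
    ((Real.Gamma α)⁻¹ * lam ^ α)
  refine MeasureTheory.IntegrableOn.congr_fun h (fun x hx => ?_) measurableSet_Ioi
  unfold gd
  ring

lemma integral_gd : ∫ x in Ioi 0, gd α lam x = 1 := by
  unfold gd
  simp only [mul_assoc]
  rw [MeasureTheory.integral_const_mul, MeasureTheory.integral_const_mul,
    Real.integral_rpow_mul_exp_neg_mul_Ioi hα hlam, one_div, Real.inv_rpow hlam.le]
  field_simp [(Real.rpow_pos_of_pos hlam α).ne', (Real.Gamma_pos_of_pos hα).ne']

lemma integrable_mul_gd : IntegrableOn (fun x => x * gd α lam x) (Ioi 0) := by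
  have h := (intOn_rpow_exp (show (-1:ℝ) < α by linarith) hlam).const_mul
    ((Real.Gamma α)⁻¹ * lam ^ α)
  refine MeasureTheory.IntegrableOn.congr_fun h (fun x hx => ?_) measurableSet_Ioi
  unfold gd
  rw [show α = α - 1 + 1 by ring, Real.rpow_add (mem_Ioi.mp hx), Real.rpow_one]
  ring

lemma integral_mul_gd : ∫ x in Ioi 0, x * gd α lam x = α / lam := by
  have e1 : ∀ x ∈ Ioi (0:ℝ), x * gd α lam x
      = (Real.Gamma α)⁻¹ * lam ^ α * (x ^ ((α + 1) - 1) * Real.exp (-(lam * x))) := by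
    intro x hx
    unfold gd
    rw [show (α + 1) - 1 = (α - 1) + 1 by ring, Real.rpow_add (mem_Ioi.mp hx), Real.rpow_one]
    ring
  rw [setIntegral_congr_fun measurableSet_Ioi e1, MeasureTheory.integral_const_mul,
    Real.integral_rpow_mul_exp_neg_mul_Ioi (by linarith) hlam, Real.Gamma_add_one hα.ne',
    one_div, Real.inv_rpow hlam.le, Real.rpow_add hlam, Real.rpow_one]
  field_simp [(Real.rpow_pos_of_pos hlam α).ne', (Real.Gamma_pos_of_pos hα).ne']

include hc

lemma integrable_add_mul_gd : IntegrableOn (fun x => (x + c) * gd α lam x) (Ioi 0) := by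
  have := (integrable_mul_gd hα hlam).add ((integrable_gd hα hlam).const_mul c)
  exact MeasureTheory.IntegrableOn.congr_fun this
    (fun x _ => by show x * gd α lam x + c * gd α lam x = _; ring) measurableSet_Ioi

lemma integral_add_mul_gd : ∫ x in Ioi 0, (x + c) * gd α lam x = α / lam + c := by
  have : ∀ x ∈ Ioi (0:ℝ), (x + c) * gd α lam x = x * gd α lam x + c * gd α lam x :=
    fun x _ => by ring
  rw [setIntegral_congr_fun measurableSet_Ioi this,
    MeasureTheory.integral_add (integrable_mul_gd hα hlam) ((integrable_gd hα hlam).const_mul c),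
    MeasureTheory.integral_const_mul, integral_mul_gd hα hlam, integral_gd hα hlam, mul_one]

lemma integrable_inv_mul_gd : IntegrableOn (fun x => (x + c)⁻¹ * gd α lam x) (Ioi 0) := by
  refine Integrable.mono ((integrable_gd hα hlam).const_mul c⁻¹) ?_ ?_
  · exact (Measurable.aestronglyMeasurable (by fun_prop)).mul meas_gd.aestronglyMeasurable
  · filter_upwards [ae_restrict_mem measurableSet_Ioi] with x hx
    have hx0 : (0:ℝ) < x := hx
    have hg : 0 ≤ gd α lam x := gd_nonneg hα hlam hx0
    rw [Real.norm_eq_abs, Real.norm_eq_abs, abs_of_nonneg (by positivity),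
      abs_of_nonneg (by positivity)]
    exact mul_le_mul_of_nonneg_right (inv_anti₀ hc (by linarith)) hg

omit hc in
lemma laplace_gd {s : ℝ} (hs : 0 ≤ s) :
    ∫ x in Ioi 0, gd α lam x * Real.exp (-(x * s)) = lam ^ α * (lam + s) ^ (-α) := by
  have hls : 0 < lam + s := by linarith
  have e : ∀ x ∈ Ioi (0:ℝ), gd α lam x * Real.exp (-(x * s))
      = (Real.Gamma α)⁻¹ * lam ^ α * (x ^ (α - 1) * Real.exp (-((lam + s) * x))) := by
    intro x _
    unfold gd
    rw [mul_assoc _ _ (Real.exp (-(x * s))), mul_assoc, ← Real.exp_add]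
    ring_nf
  rw [setIntegral_congr_fun measurableSet_Ioi e, MeasureTheory.integral_const_mul,
    Real.integral_rpow_mul_exp_neg_mul_Ioi hα hls, one_div, Real.inv_rpow hls.le,
    ← Real.rpow_neg hls.le]
  field_simp [(Real.Gamma_pos_of_pos hα).ne']

lemma fubini_step :
    ∫ x in Ioi 0, (x + c)⁻¹ * gd α lam x
      = ∫ s in Ioi 0, Real.exp (-(c * s)) * (lam ^ α * (lam + s) ^ (-α)) := by
  have hmeas : AEStronglyMeasurable
      (uncurry fun x s => gd α lam x * Real.exp (-((x + c) * s)))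
      ((volume.restrict (Ioi (0:ℝ))).prod (volume.restrict (Ioi (0:ℝ)))) := by
    apply Measurable.aestronglyMeasurable
    exact (meas_gd.comp measurable_fst).mul (by fun_prop)
  have inner_s : ∀ x ∈ Ioi (0:ℝ),
      ∫ s in Ioi (0:ℝ), gd α lam x * Real.exp (-((x + c) * s)) = (x + c)⁻¹ * gd α lam x := by
    intro x hx
    have hxc : (0:ℝ) < x + c := by have : (0:ℝ) < x := hx; linarith
    rw [MeasureTheory.integral_const_mul, integral_exp_neg_mul_Ioi_zero hxc, mul_comm]
  have int_s : ∀ x ∈ Ioi (0:ℝ),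
      Integrable (fun s => gd α lam x * Real.exp (-((x + c) * s)))
        (volume.restrict (Ioi (0:ℝ))) := by
    intro x hx
    have hxc : (0:ℝ) < x + c := by have : (0:ℝ) < x := hx; linarith
    have h1 : IntegrableOn (fun s : ℝ => Real.exp (-((x + c) * s))) (Ioi 0) := by
      refine MeasureTheory.IntegrableOn.congr_fun (exp_neg_integrableOn_Ioi 0 hxc)
        (fun s _ => ?_) measurableSet_Ioi
      rw [neg_mul]
    exact h1.const_mul _
  have hint : Integrable (uncurry fun x s => gd α lam x * Real.exp (-((x + c) * s)))
      ((volume.restrict (Ioi (0:ℝ))).prod (volume.restrict (Ioi (0:ℝ)))) := by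
    rw [MeasureTheory.integrable_prod_iff hmeas]
    refine ⟨?_, ?_⟩
    · filter_upwards [ae_restrict_mem measurableSet_Ioi] with x hx using int_s x hx
    · have key : ∀ x ∈ Ioi (0:ℝ),
          (x + c)⁻¹ * gd α lam x
            = ∫ s in Ioi (0:ℝ), ‖gd α lam x * Real.exp (-((x + c) * s))‖ := by
        intro x hx
        have hx0 : (0:ℝ) < x := hx
        have hnorm : ∀ s : ℝ, ‖gd α lam x * Real.exp (-((x + c) * s))‖
            = gd α lam x * Real.exp (-((x + c) * s)) := fun s => by
          rw [Real.norm_eq_abs, abs_of_nonneg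
            (mul_nonneg (gd_nonneg hα hlam hx0) (Real.exp_pos _).le)]
        simp only [hnorm]
        exact (inner_s x hx).symm
      exact MeasureTheory.IntegrableOn.congr_fun
        (integrable_inv_mul_gd hα hlam hc) key measurableSet_Ioi
  calc ∫ x in Ioi (0:ℝ), (x + c)⁻¹ * gd α lam x
      = ∫ x in Ioi (0:ℝ), ∫ s in Ioi (0:ℝ), gd α lam x * Real.exp (-((x + c) * s)) :=
        setIntegral_congr_fun measurableSet_Ioi (fun x hx => (inner_s x hx).symm)
    _ = ∫ s in Ioi (0:ℝ), ∫ x in Ioi (0:ℝ), gd α lam x * Real.exp (-((x + c) * s)) :=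
        MeasureTheory.integral_integral_swap hint
    _ = ∫ s in Ioi (0:ℝ), Real.exp (-(c * s)) * (lam ^ α * (lam + s) ^ (-α)) := by
        refine setIntegral_congr_fun measurableSet_Ioi (fun s hs => ?_)
        have hs0 : (0:ℝ) < s := hs
        have e : ∀ x : ℝ, gd α lam x * Real.exp (-((x + c) * s))
            = Real.exp (-(c * s)) * (gd α lam x * Real.exp (-(x * s))) := fun x => by
          rw [show -((x + c) * s) = -(x * s) + -(c * s) by ring, Real.exp_add]
          ring
        simp only [e]
        rw [MeasureTheory.integral_const_mul, laplace_gd hα hlam hs0.le]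

omit hα in
lemma uiGamma_subst :
    uiGamma (1 - α) (lam * c)
      = c * (Real.exp (-(lam * c)) * c ^ (-α) *
          ∫ s in Ioi (0:ℝ), Real.exp (-(c * s)) * (lam + s) ^ (-α)) := by
  have h1 : uiGamma (1 - α) (lam * c)
      = ∫ t in Ioi (lam * c), Real.exp (-t) * t ^ (-α) := by
    unfold uiGamma
    refine setIntegral_congr_fun measurableSet_Ioi (fun t _ => ?_)
    rw [show (1 - α) - 1 = -α by ring]
  have h2 : ∫ t in Ioi (lam * c), Real.exp (-t) * t ^ (-α)
      = ∫ u in Ioi (0:ℝ), Real.exp (-(u + lam * c)) * (u + lam * c) ^ (-α) := by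
    rw [integral_Ioi_comp_add_right (fun t => Real.exp (-t) * t ^ (-α)) 0 (lam * c), zero_add]
  have h3 := MeasureTheory.integral_comp_mul_left_Ioi
    (fun u => Real.exp (-(u + lam * c)) * (u + lam * c) ^ (-α)) 0 hc
  simp only [mul_zero, smul_eq_mul] at h3
  have h4 : ∀ s ∈ Ioi (0:ℝ),
      Real.exp (-(c * s + lam * c)) * (c * s + lam * c) ^ (-α)
        = Real.exp (-(lam * c)) * c ^ (-α) * (Real.exp (-(c * s)) * (lam + s) ^ (-α)) := by
    intro s hs
    have hs0 : (0:ℝ) < s := hs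
    rw [show -(c * s + lam * c) = -(c * s) + -(lam * c) by ring, Real.exp_add,
      show c * s + lam * c = c * (lam + s) by ring,
      Real.mul_rpow hc.le (by linarith)]
    ring
  rw [h1, h2]
  have h5 : ∫ u in Ioi (0:ℝ), Real.exp (-(u + lam * c)) * (u + lam * c) ^ (-α)
      = c * ∫ s in Ioi (0:ℝ), Real.exp (-(c * s + lam * c)) * (c * s + lam * c) ^ (-α) := by
    rw [h3, ← mul_assoc, mul_inv_cancel₀ hc.ne', one_mul]
  rw [h5, setIntegral_congr_fun measurableSet_Ioi h4, MeasureTheory.integral_const_mul]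

/-- The inverse moment in terms of the incomplete Gamma function. -/
lemma inv_moment :
    c * ∫ x in Ioi 0, (x + c)⁻¹ * gd α lam x
      = (lam * c) ^ α * Real.exp (lam * c) * uiGamma (1 - α) (lam * c) := by
  rw [fubini_step hα hlam hc, uiGamma_subst hlam hc]
  have e : ∀ s : ℝ, Real.exp (-(c * s)) * (lam ^ α * (lam + s) ^ (-α))
      = lam ^ α * (Real.exp (-(c * s)) * (lam + s) ^ (-α)) := fun s => by ring
  simp only [e]
  rw [MeasureTheory.integral_const_mul, Real.mul_rpow hlam.le hc.le,
    Real.exp_neg, Real.rpow_neg hc.le]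
  have h1 : Real.exp (lam * c) ≠ 0 := (Real.exp_pos _).ne'
  have h2 : (c : ℝ) ^ α ≠ 0 := (Real.rpow_pos_of_pos hc _).ne'
  field_simp

lemma inv_moment_pos : 0 < ∫ x in Ioi 0, (x + c)⁻¹ * gd α lam x := by
  rw [MeasureTheory.setIntegral_pos_iff_support_of_nonneg_ae ?_ (integrable_inv_mul_gd hα hlam hc)]
  · refine lt_of_lt_of_le ?_ (measure_mono (?_ : Ioi (0:ℝ) ⊆ _))
    · rw [Real.volume_Ioi]
      exact ENNReal.zero_lt_top
    · intro x hx
      have hx0 : (0:ℝ) < x := hx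
      refine ⟨?_, hx⟩
      exact ne_of_gt (mul_pos (inv_pos.mpr (by linarith)) (gd_pos hα hlam hx0))
  · filter_upwards [ae_restrict_mem measurableSet_Ioi] with x hx
    have hx0 : (0:ℝ) < x := hx
    exact mul_nonneg (inv_nonneg.mpr (by linarith)) (gd_nonneg hα hlam hx0)

lemma quad_pos {t : ℝ} (ht : 0 < t) :
    0 < (α / lam + c) - 2 * t + t ^ 2 * ∫ x in Ioi 0, (x + c)⁻¹ * gd α lam x := by
  set I2 := ∫ x in Ioi 0, (x + c)⁻¹ * gd α lam x with hI2
  have hq_eq : ∀ x ∈ Ioi (0:ℝ), ((x + c) - t) ^ 2 * ((x + c)⁻¹ * gd α lam x)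
      = (x + c) * gd α lam x - 2 * t * gd α lam x + t ^ 2 * ((x + c)⁻¹ * gd α lam x) := by
    intro x hx
    have hx0 : (0:ℝ) < x := hx
    have hxc : (0:ℝ) < x + c := by linarith
    field_simp
    ring
  have hint : IntegrableOn (fun x => ((x + c) - t) ^ 2 * ((x + c)⁻¹ * gd α lam x)) (Ioi 0) := by
    have h := ((integrable_add_mul_gd hα hlam hc).sub
        ((integrable_gd hα hlam).const_mul (2 * t))).add
      ((integrable_inv_mul_gd hα hlam hc).const_mul (t ^ 2))
    refine MeasureTheory.IntegrableOn.congr_fun h (fun x hx => ?_) measurableSet_Ioi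
    show (x + c) * gd α lam x - 2 * t * gd α lam x + t ^ 2 * ((x + c)⁻¹ * gd α lam x) = _
    exact (hq_eq x hx).symm
  have hval : ∫ x in Ioi 0, ((x + c) - t) ^ 2 * ((x + c)⁻¹ * gd α lam x)
      = (α / lam + c) - 2 * t + t ^ 2 * I2 := by
    have hsub : IntegrableOn (fun x => (x + c) * gd α lam x - 2 * t * gd α lam x) (Ioi 0) :=
      (integrable_add_mul_gd hα hlam hc).sub ((integrable_gd hα hlam).const_mul (2 * t))
    rw [setIntegral_congr_fun measurableSet_Ioi hq_eq,
      MeasureTheory.integral_add hsub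
        ((integrable_inv_mul_gd hα hlam hc).const_mul (t ^ 2))]
    rw [MeasureTheory.integral_sub (integrable_add_mul_gd hα hlam hc)
        ((integrable_gd hα hlam).const_mul (2 * t)),
      MeasureTheory.integral_const_mul, MeasureTheory.integral_const_mul,
      integral_add_mul_gd hα hlam hc, integral_gd hα hlam, mul_one]
  have hpos : 0 < ∫ x in Ioi 0, ((x + c) - t) ^ 2 * ((x + c)⁻¹ * gd α lam x) := by
    rw [MeasureTheory.setIntegral_pos_iff_support_of_nonneg_ae ?_ hint]
    · refine lt_of_lt_of_le ?_ (measure_mono (?_ : Ioi (0:ℝ) \ {t - c} ⊆ _))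
      · rw [measure_diff_null (measure_singleton _), Real.volume_Ioi]
        exact ENNReal.zero_lt_top
      · rintro x ⟨hx, hx'⟩
        have hx0 : (0:ℝ) < x := hx
        have hxc : (0:ℝ) < x + c := by linarith
        refine ⟨?_, hx⟩
        have hne : (x + c) - t ≠ 0 := by
          intro h
          exact hx' (by simp only [mem_singleton_iff]; linarith)
        exact ne_of_gt (mul_pos (by positivity)
          (mul_pos (inv_pos.mpr hxc) (gd_pos hα hlam hx0)))
    · filter_upwards [ae_restrict_mem measurableSet_Ioi] with x hx
      have hx0 : (0:ℝ) < x := hx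
      exact mul_nonneg (sq_nonneg _)
        (mul_nonneg (inv_nonneg.mpr (by linarith)) (gd_nonneg hα hlam hx0))
  linarith [hval ▸ hpos]

lemma product_gt_one :
    1 < (α / lam + c) * ∫ x in Ioi 0, (x + c)⁻¹ * gd α lam x := by
  set I2 := ∫ x in Ioi 0, (x + c)⁻¹ * gd α lam x with hI2def
  have hI2 : 0 < I2 := inv_moment_pos hα hlam hc
  have hI1 : 0 < α / lam + c := by positivity
  set t := Real.sqrt ((α / lam + c) / I2) with htdef
  have ht : 0 < t := Real.sqrt_pos.mpr (div_pos hI1 hI2)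
  have ht2 : t ^ 2 * I2 = α / lam + c := by
    rw [htdef, Real.sq_sqrt (div_nonneg hI1.le hI2.le), div_mul_cancel₀ _ hI2.ne']
  have hq := quad_pos hα hlam hc ht
  rw [show (α / lam + c) - 2 * t + t ^ 2 * I2 = 2 * (α / lam + c) - 2 * t by rw [ht2]; ring] at hq
  have hlt : t < α / lam + c := by linarith
  have h1 : 1 < t * I2 := by
    have h0 : t * 1 < t * (t * I2) := by nlinarith
    exact lt_of_mul_lt_mul_left (by linarith) ht.le
  have h2 : (α / lam + c) * I2 = (t * I2) ^ 2 := by rw [← ht2]; ring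
  rw [h2]
  nlinarith

end auxiliary

theorem expectation_C_mul_inv_C (a b c : ℝ) (ha : 0 < a) (hb : b < 0) (hc : 0 < c) :
    (∫ x in Set.Ioi (0 : ℝ), (x + c) * gDens a b x) *
        (∫ x in Set.Ioi (0 : ℝ), (x + c)⁻¹ * gDens a b x) - 1
      = psi a b c * (1 - a / (b * c)) - 1 ∧
    0 < psi a b c * (1 - a / (b * c)) - 1 := by
  have hα : 0 < a / 2 := by linarith
  have hlam : 0 < -b / 2 := by linarith
  have hb0 : b ≠ 0 := ne_of_lt hb
  have hgd : ∀ x : ℝ, gDens a b x = gd (a / 2) (-b / 2) x := by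
    intro x
    unfold gDens gd
    rw [show b * x / 2 = -(-b / 2 * x) by ring]
  simp only [hgd]
  have hI1 : ∫ x in Ioi (0:ℝ), (x + c) * gd (a / 2) (-b / 2) x = (a / 2) / (-b / 2) + c :=
    integral_add_mul_gd hα hlam hc
  have hpsi : psi a b c = c * ∫ x in Ioi (0:ℝ), (x + c)⁻¹ * gd (a / 2) (-b / 2) x := by
    rw [inv_moment hα hlam hc]
    unfold psi
    rw [show (-(b * c) / 2 : ℝ) = -b / 2 * c by ring]
  have hfac : (a / 2) / (-b / 2) + c = c * (1 - a / (b * c)) := by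
    field_simp
    ring
  have hprod := product_gt_one hα hlam hc
  have key : psi a b c * (1 - a / (b * c))
      = ((a / 2) / (-b / 2) + c) * ∫ x in Ioi (0:ℝ), (x + c)⁻¹ * gd (a / 2) (-b / 2) x := by
    rw [hpsi, hfac]
    ring
  constructor
  · rw [hI1, key]
  · rw [key]
    linarith [hprod]
end

section
/- Let a > 0, b < 0, c > 0, and let X ~ Gamma(a/2, −b/2). Then E[X/(X+c)²] = (a/2)·E[1/(X+c)] + (b/2)·E[X/(X+c)]. -/
open Real Set

open MeasureTheory Filter Topology

theorem expectation_X_div_shift_sq_recurrence (a b c : ℝ)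
    (ha : 0 < a) (hb : b < 0) (hc : 0 < c) :
    (∫ x in Set.Ioi (0 : ℝ), x / (x + c) ^ 2 * gDens a b x)
      = a / 2 * (∫ x in Set.Ioi (0 : ℝ), (x + c)⁻¹ * gDens a b x)
        + b / 2 * (∫ x in Set.Ioi (0 : ℝ), x / (x + c) * gDens a b x) := by
  have hr : (0:ℝ) < -b / 2 := by linarith
  have hA : (0:ℝ) < a / 2 := by linarith
  set φ : ℝ → ℝ := fun x => x ^ (a / 2 - 1) * Real.exp (b * x / 2) with hφ
  have hφm : Measurable φ := by
    apply Measurable.mul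
    · exact measurable_id.pow_const _
    · exact (((measurable_id.const_mul b).div_const 2).exp)
  -- base integrability
  have hφint : IntegrableOn φ (Ioi 0) := by
    have h0 := Real.GammaIntegral_convergent hA
    have h1 : IntegrableOn
        (fun x : ℝ => Real.exp (-((-b / 2) * x)) * ((-b / 2) * x) ^ (a / 2 - 1)) (Ioi 0) := by
      have := (integrableOn_Ioi_comp_mul_left_iff
        (fun x : ℝ => Real.exp (-x) * x ^ (a / 2 - 1)) 0 hr).mpr
      simpa using this (by simpa using h0)
    have h2 := h1.const_mul (((-b / 2) ^ (a / 2 - 1))⁻¹)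
    refine MeasureTheory.IntegrableOn.congr_fun h2 (fun x hx => ?_) measurableSet_Ioi
    have hx0 : (0:ℝ) < x := hx
    rw [Real.mul_rpow hr.le hx0.le, show -((-b / 2) * x) = b * x / 2 by ring]
    simp only [hφ]
    rw [mul_comm (Real.exp _), ← mul_assoc, ← mul_assoc,
      inv_mul_cancel₀ (Real.rpow_pos_of_pos hr _).ne', one_mul]
  -- positivity of φ
  have hφpos : ∀ x : ℝ, 0 < x → 0 < φ x := fun x hx =>
    mul_pos (Real.rpow_pos_of_pos hx _) (Real.exp_pos _)
  -- generic integrability of q * φ for bounded nonneg q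
  have hI : ∀ (q : ℝ → ℝ) (C : ℝ), Measurable q →
      (∀ x : ℝ, 0 < x → 0 ≤ q x ∧ q x ≤ C) →
      IntegrableOn (fun x => q x * φ x) (Ioi 0) := by
    intro q C hq hbd
    refine Integrable.mono' (hφint.const_mul C)
      ((hq.mul hφm).aestronglyMeasurable) ?_
    rw [ae_restrict_iff' measurableSet_Ioi]
    refine ae_of_all _ fun x hx => ?_
    have hx0 : (0:ℝ) < x := hx
    have hp := hφpos x hx0
    rw [Real.norm_eq_abs, abs_of_nonneg (mul_nonneg (hbd x hx0).1 hp.le)]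
    exact mul_le_mul_of_nonneg_right (hbd x hx0).2 hp.le
  have I1 : IntegrableOn (fun x => x / (x + c) ^ 2 * φ x) (Ioi 0) := by
    refine hI _ c⁻¹ (measurable_id.div ((measurable_id.add_const c).pow_const 2)) fun x hx => ?_
    have hxc : (0:ℝ) < x + c := by linarith
    constructor
    · positivity
    · rw [div_le_iff₀ (by positivity)]
      rw [inv_mul_eq_div, le_div_iff₀ hc]
      nlinarith [sq_nonneg x, sq_nonneg c, mul_pos hx hc]
  have I2 : IntegrableOn (fun x => (x + c)⁻¹ * φ x) (Ioi 0) := by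
    refine hI _ c⁻¹ ((measurable_id.add_const c).inv) fun x hx => ?_
    have hxc : (0:ℝ) < x + c := by linarith
    exact ⟨by positivity, by gcongr; linarith⟩
  have I3 : IntegrableOn (fun x => x / (x + c) * φ x) (Ioi 0) := by
    refine hI _ 1 (measurable_id.div (measurable_id.add_const c)) fun x hx => ?_
    have hxc : (0:ℝ) < x + c := by linarith
    exact ⟨by positivity, (div_le_one hxc).2 (by linarith)⟩
  -- FTC part
  set F : ℝ → ℝ := fun x => -(x + c)⁻¹ * (x ^ (a / 2) * Real.exp (b * x / 2)) with hF
  set F' : ℝ → ℝ := fun x =>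
    x / (x + c) ^ 2 * φ x - (a / 2 * ((x + c)⁻¹ * φ x) + b / 2 * (x / (x + c) * φ x)) with hF'
  have hderiv : ∀ x ∈ Ioi (0:ℝ), HasDerivAt F (F' x) x := by
    intro x hx
    have hx0 : (0:ℝ) < x := hx
    have hxc : (0:ℝ) < x + c := by linarith
    have hu : HasDerivAt (fun y : ℝ => -(y + c)⁻¹) (-(-1 / (x + c) ^ 2)) x :=
      (((hasDerivAt_id x).add_const c).inv hxc.ne').neg
    have hv1 : HasDerivAt (fun y : ℝ => y ^ (a / 2)) (a / 2 * x ^ (a / 2 - 1)) x :=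
      Real.hasDerivAt_rpow_const (Or.inl hx0.ne')
    have hv2 : HasDerivAt (fun y : ℝ => Real.exp (b * y / 2))
        (Real.exp (b * x / 2) * (b / 2)) x := by
      have h : HasDerivAt (fun y : ℝ => b * y / 2) (b / 2) x := by
        simpa using ((hasDerivAt_id x).const_mul b).div_const 2
      exact h.exp
    have hmain : HasDerivAt (fun y : ℝ => -(y + c)⁻¹ * (y ^ (a / 2) * Real.exp (b * y / 2))) _ x :=
      hu.mul (hv1.mul hv2)
    convert hmain using 1
    have hsplit : x ^ (a / 2) = x ^ (a / 2 - 1) * x := by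
      rw [← Real.rpow_add_one hx0.ne', sub_add_cancel]
    simp only [hF', hφ, hsplit]
    field_simp
    ring
  have hcont : ContinuousWithinAt F (Ici (0:ℝ)) 0 := by
    apply ContinuousAt.continuousWithinAt
    apply ContinuousAt.mul
    · exact ((continuousAt_id.add continuousAt_const).inv₀ (by simpa using hc.ne')).neg
    · exact (Real.continuousAt_rpow_const 0 _ (Or.inr hA.le)).mul (by fun_prop)
  have htop : Tendsto F atTop (𝓝 0) := by
    have h1 : Tendsto (fun x : ℝ => x ^ (a / 2) * Real.exp (b * x / 2)) atTop (𝓝 0) := by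
      have := tendsto_rpow_mul_exp_neg_mul_atTop_nhds_zero (a / 2) (-b / 2) hr
      refine this.congr fun x => ?_
      congr 2
      ring
    have h2 : Tendsto (fun x : ℝ => -(x + c)⁻¹) atTop (𝓝 0) := by
      simpa using (tendsto_inv_atTop_zero.comp (tendsto_atTop_add_const_right _ c tendsto_id)).neg
    simpa [hF, neg_mul] using h2.mul h1
  have hF'int : IntegrableOn F' (Ioi 0) :=
    I1.sub ((I2.const_mul (a / 2)).add (I3.const_mul (b / 2)))
  have hFTC := integral_Ioi_of_hasDerivAt_of_tendsto hcont hderiv hF'int htop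
  have hF0 : F 0 = 0 := by
    simp [hF, Real.zero_rpow hA.ne']
  rw [hF0, sub_zero] at hFTC
  have hsum : (∫ x in Ioi (0:ℝ), F' x)
      = (∫ x in Ioi (0:ℝ), x / (x + c) ^ 2 * φ x)
        - (a / 2 * (∫ x in Ioi (0:ℝ), (x + c)⁻¹ * φ x)
          + b / 2 * (∫ x in Ioi (0:ℝ), x / (x + c) * φ x)) := by
    have hadd : Integrable
        (fun x => a / 2 * ((x + c)⁻¹ * φ x) + b / 2 * (x / (x + c) * φ x))
        (volume.restrict (Ioi 0)) := (I2.const_mul (a / 2)).add (I3.const_mul (b / 2))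
    simp only [hF']
    rw [integral_sub I1 hadd,
      integral_add (I2.const_mul (a / 2)) (I3.const_mul (b / 2)),
      integral_const_mul, integral_const_mul]
  rw [hFTC] at hsum
  -- reduce the goal to the φ identity
  set K : ℝ := (Real.Gamma (a / 2))⁻¹ * (-b / 2) ^ (a / 2) with hK
  have hg : ∀ x : ℝ, gDens a b x = K * φ x := by
    intro x
    simp only [gDens, hK, hφ]
    ring
  have hpull : ∀ q : ℝ → ℝ, (∫ x in Ioi (0:ℝ), q x * gDens a b x)
      = K * ∫ x in Ioi (0:ℝ), q x * φ x := by
    intro q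
    rw [← integral_const_mul]
    exact setIntegral_congr_fun measurableSet_Ioi fun x _ => by rw [hg]; ring
  rw [hpull fun x => x / (x + c) ^ 2, hpull fun x => (x + c)⁻¹, hpull fun x => x / (x + c)]
  linear_combination (K : ℝ) * hsum.symm
end

section
/- Let a > 0, b < 0, c > 0, and let X ~ Gamma(a/2, −b/2). Then E[X²/(X+c)²] = ((a+2)/2)·E[X/(X+c)] + (b/2)·E[X²/(X+c)]. -/
open Real Set

open MeasureTheory Filter Topology

lemma base_integrable_s16 {b : ℝ} (hb : b < 0) {s : ℝ} (hs : -1 < s) :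
    IntegrableOn (fun x : ℝ => x ^ s * Real.exp (b * x / 2)) (Ioi 0) := by
  have h := integrableOn_rpow_mul_exp_neg_mul_rpow hs (by norm_num : (0:ℝ) < 1) (by linarith : (0:ℝ) < -b/2)
  refine h.congr_fun (fun x hx => ?_) measurableSet_Ioi
  dsimp only
  rw [Real.rpow_one, show -(-b/2) * x = b * x / 2 by ring]

lemma piece_integrable {b c : ℝ} (hb : b < 0) (hc : 0 < c) {s : ℝ} (hs : -1 < s) (n : ℕ) :
    IntegrableOn (fun x : ℝ => x ^ s * Real.exp (b * x / 2) / (x + c) ^ n) (Ioi 0) := by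
  refine Integrable.mono' ((base_integrable_s16 hb hs).const_mul (c ^ n)⁻¹) ?_ ?_
  · refine (Measurable.aestronglyMeasurable ?_)
    exact ((measurable_id.pow_const s).mul ((measurable_id.const_mul b |>.div_const 2).exp)).div
      ((measurable_id.add_const c).pow_const n)
  · rw [ae_restrict_iff' measurableSet_Ioi]
    refine ae_of_all _ fun x hx => ?_
    have hx0 : (0:ℝ) < x := hx
    have h1 : (0:ℝ) < x + c := by linarith
    have hnum : 0 ≤ x ^ s * Real.exp (b * x / 2) :=
      mul_nonneg (Real.rpow_nonneg hx0.le _) (Real.exp_nonneg _)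
    rw [Real.norm_eq_abs, abs_of_nonneg (div_nonneg hnum (by positivity))]
    rw [div_le_iff₀ (by positivity), mul_comm ((c ^ n)⁻¹) _, mul_assoc]
    nth_rewrite 1 [← mul_one (x ^ s * Real.exp (b * x / 2))]
    refine mul_le_mul_of_nonneg_left ?_ hnum
    calc (1:ℝ) = (c ^ n)⁻¹ * c ^ n := (inv_mul_cancel₀ (by positivity)).symm
    _ ≤ (c ^ n)⁻¹ * (x + c) ^ n :=
        mul_le_mul_of_nonneg_left (pow_le_pow_left₀ hc.le (by linarith) n) (by positivity)

lemma key_identity {α b c : ℝ} (hα : 0 < α) (hb : b < 0) (hc : 0 < c) :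
    (∫ x in Ioi (0:ℝ), x ^ (α+1) * Real.exp (b * x / 2) / (x + c) ^ 2)
      = (α + 1) * (∫ x in Ioi (0:ℝ), x ^ α * Real.exp (b * x / 2) / (x + c))
        + b / 2 * (∫ x in Ioi (0:ℝ), x ^ (α+1) * Real.exp (b * x / 2) / (x + c)) := by
  set G : ℝ → ℝ := fun x => x ^ (α+1) * Real.exp (b * x / 2) / (x + c) with hGdef
  set g : ℝ → ℝ := fun x =>
    (α + 1) * (x ^ α * Real.exp (b * x / 2) / (x + c))
      + b / 2 * (x ^ (α+1) * Real.exp (b * x / 2) / (x + c))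
      - x ^ (α+1) * Real.exp (b * x / 2) / (x + c) ^ 2 with hgdef
  have hint1 := piece_integrable hb hc (by linarith : (-1:ℝ) < α + 1) 2
  have hint2 : IntegrableOn (fun x : ℝ => x ^ α * Real.exp (b * x / 2) / (x + c)) (Ioi 0) := by
    simpa [pow_one] using piece_integrable hb hc (by linarith : (-1:ℝ) < α) 1
  have hint3 : IntegrableOn (fun x : ℝ => x ^ (α+1) * Real.exp (b * x / 2) / (x + c)) (Ioi 0) := by
    simpa [pow_one] using piece_integrable hb hc (by linarith : (-1:ℝ) < α + 1) 1
  have hA : IntegrableOn (fun x : ℝ =>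
      (α + 1) * (x ^ α * Real.exp (b * x / 2) / (x + c))
        + b / 2 * (x ^ (α+1) * Real.exp (b * x / 2) / (x + c))) (Ioi 0) :=
    (hint2.const_mul (α+1)).add (hint3.const_mul (b/2))
  have hgint : IntegrableOn g (Ioi 0) := hA.sub hint1
  have halg : ∀ A B E v : ℝ, v ≠ 0 →
      (α + 1) * (A * E / v) + b / 2 * (B * E / v) - B * E / v ^ 2
        = (((α+1) * A * E + B * (E * (b/2))) * v - B * E * 1) / v ^ 2 := by
    intro A B E v hv
    field_simp
  have hderiv : ∀ x ∈ Ioi (0:ℝ), HasDerivAt G (g x) x := by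
    intro x hx
    have hx0 : (0:ℝ) < x := hx
    have hvc : x + c ≠ 0 := by positivity
    have hu : HasDerivAt (fun y : ℝ => y ^ (α+1)) ((α+1) * x ^ α) x := by
      have := Real.hasDerivAt_rpow_const (x := x) (p := α+1) (Or.inl hx0.ne')
      simpa [show α + 1 - 1 = α by ring] using this
    have he : HasDerivAt (fun y : ℝ => Real.exp (b * y / 2)) (Real.exp (b * x / 2) * (b/2)) x := by
      have h0 : HasDerivAt (fun y : ℝ => b * y / 2) (b/2) x := by
        simpa using ((hasDerivAt_id x).const_mul b).div_const 2
      exact h0.exp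
    have hv : HasDerivAt (fun y : ℝ => y + c) 1 x := (hasDerivAt_id x).add_const c
    have hd := (hu.mul he).div hv hvc
    exact hd.congr_deriv (halg (x ^ α) (x ^ (α+1)) (Real.exp (b * x / 2)) (x + c) hvc).symm
  have hcont : ContinuousWithinAt G (Ici 0) 0 := by
    have h1 : ContinuousWithinAt (fun x : ℝ => x ^ (α+1)) (Ici 0) 0 :=
      (Real.continuousAt_rpow_const 0 (α+1) (Or.inr (by linarith))).continuousWithinAt
    have h2 : ContinuousWithinAt (fun x : ℝ => Real.exp (b * x / 2)) (Ici 0) 0 :=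
      (Real.continuous_exp.comp ((continuous_const.mul continuous_id).div_const 2)).continuousWithinAt
    have h3 : ContinuousWithinAt (fun x : ℝ => x + c) (Ici 0) 0 :=
      (continuous_id.add continuous_const).continuousWithinAt
    exact (h1.mul h2).div h3 (by simpa using hc.ne')
  have hG0 : G 0 = 0 := by
    simp [hGdef, Real.zero_rpow (by linarith : α + 1 ≠ 0)]
  have htend : Tendsto G atTop (𝓝 0) := by
    have hbase : Tendsto (fun x : ℝ => c⁻¹ * (x ^ (α+1) * Real.exp (-(-b/2) * x))) atTop
        (𝓝 (c⁻¹ * 0)) :=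
      (tendsto_rpow_mul_exp_neg_mul_atTop_nhds_zero (α+1) (-b/2) (by linarith)).const_mul _
    rw [mul_zero] at hbase
    refine squeeze_zero' ?_ ?_ hbase
    · filter_upwards [eventually_gt_atTop 0] with x hx
      have : (0:ℝ) < x + c := by linarith
      exact div_nonneg (mul_nonneg (Real.rpow_nonneg hx.le _) (Real.exp_nonneg _)) this.le
    · filter_upwards [eventually_gt_atTop 0] with x hx
      have h1 : (0:ℝ) < x + c := by linarith
      have hnum : 0 ≤ x ^ (α+1) * Real.exp (b * x / 2) :=
        mul_nonneg (Real.rpow_nonneg hx.le _) (Real.exp_nonneg _)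
      rw [show -(-b/2) * x = b * x / 2 by ring]
      show x ^ (α+1) * Real.exp (b * x / 2) / (x + c) ≤ _
      rw [div_le_iff₀ h1, mul_comm c⁻¹, mul_assoc]
      nth_rewrite 1 [← mul_one (x ^ (α+1) * Real.exp (b * x / 2))]
      refine mul_le_mul_of_nonneg_left ?_ hnum
      calc (1:ℝ) = c⁻¹ * c := (inv_mul_cancel₀ hc.ne').symm
      _ ≤ c⁻¹ * (x + c) := by
          refine mul_le_mul_of_nonneg_left (by linarith) (by positivity)
  have hzero : ∫ x in Ioi (0:ℝ), g x = 0 := by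
    rw [integral_Ioi_of_hasDerivAt_of_tendsto hcont hderiv hgint htend, hG0, sub_zero]
  have hsplit : ∫ x in Ioi (0:ℝ), g x
      = ((α+1) * (∫ x in Ioi (0:ℝ), x ^ α * Real.exp (b * x / 2) / (x + c))
        + b/2 * (∫ x in Ioi (0:ℝ), x ^ (α+1) * Real.exp (b * x / 2) / (x + c)))
        - ∫ x in Ioi (0:ℝ), x ^ (α+1) * Real.exp (b * x / 2) / (x + c) ^ 2 := by
    rw [hgdef]
    rw [integral_sub hA hint1,
      integral_add (hint2.const_mul (α+1)) (hint3.const_mul (b/2)),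
      integral_const_mul, integral_const_mul]
  rw [hsplit] at hzero
  linarith

lemma main_congr {a b : ℝ} (c : ℝ) (ha : 0 < a) (m n : ℕ) :
    (∫ x in Ioi (0:ℝ), x ^ m / (x + c) ^ n * gDens a b x)
      = (Real.Gamma (a/2))⁻¹ * (-b/2) ^ (a/2) *
        ∫ x in Ioi (0:ℝ), x ^ (a/2 - 1 + m) * Real.exp (b * x / 2) / (x + c) ^ n := by
  rw [← integral_const_mul]
  refine setIntegral_congr_fun measurableSet_Ioi fun x hx => ?_
  have hx0 : (0:ℝ) < x := hx
  have hp : x ^ (a/2 - 1) * x ^ ((m:ℕ):ℝ) = x ^ (a/2 - 1 + m) := (Real.rpow_add hx0 _ _).symm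
  have hm : (x:ℝ) ^ m = x ^ ((m:ℕ):ℝ) := (Real.rpow_natCast x m).symm
  unfold gDens
  calc x ^ m / (x + c) ^ n
        * ((Real.Gamma (a / 2))⁻¹ * (-b / 2) ^ (a / 2) * x ^ (a / 2 - 1) * Real.exp (b * x / 2))
      = (Real.Gamma (a / 2))⁻¹ * (-b / 2) ^ (a / 2)
          * (x ^ (a/2 - 1) * x ^ ((m:ℕ):ℝ) * Real.exp (b * x / 2) / (x + c) ^ n) := by
        rw [← hm]; ring
    _ = _ := by rw [hp]

theorem expectation_sq_div_shift_sq_recurrence (a b c : ℝ)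
    (ha : 0 < a) (hb : b < 0) (hc : 0 < c) :
    (∫ x in Set.Ioi (0 : ℝ), x ^ 2 / (x + c) ^ 2 * gDens a b x)
      = (a + 2) / 2 * (∫ x in Set.Ioi (0 : ℝ), x / (x + c) * gDens a b x)
        + b / 2 * (∫ x in Set.Ioi (0 : ℝ), x ^ 2 / (x + c) * gDens a b x) := by
  have hα : 0 < a / 2 := by linarith
  have e1 := main_congr (b := b) c ha 2 2
  have e2 := main_congr (b := b) c ha 1 1
  have e3 := main_congr (b := b) c ha 2 1
  simp only [pow_one] at e1 e2 e3
  rw [show a/2 - 1 + ((2:ℕ):ℝ) = a/2 + 1 by push_cast; ring] at e1 e3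
  rw [show a/2 - 1 + ((1:ℕ):ℝ) = a/2 by push_cast; ring] at e2
  rw [e1, e2, e3, key_identity hα hb hc]
  ring
end

section
/- For a > 0, b < 0 and c > 0, ∫_0^∞ x^{a/2−1} e^{bx/2}/(x+c) dx = c^{a/2−1} e^{−bc/2} Γ(a/2) Γ(1−a/2, −bc/2), where Γ(·) is the gamma function and Γ(·,·) the upper incomplete gamma function. -/
open Real Set

open MeasureTheory
lemma my_exp_integral {k : ℝ} (hk : 0 < k) :
    ∫ t in Ioi (0:ℝ), Real.exp (-(k * t)) = k⁻¹ := by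
  have := Real.integral_rpow_mul_exp_neg_mul_Ioi one_pos hk
  simpa [Real.Gamma_one, one_div] using this

lemma my_gamma_integrable {s : ℝ} (hs : 0 < s) {r : ℝ} (hr : 0 < r) :
    IntegrableOn (fun x : ℝ => x ^ (s - 1) * Real.exp (-(r * x))) (Ioi 0) := by
  have := integrableOn_rpow_mul_exp_neg_mul_rpow (p := 1) (s := s - 1) (b := r)
    (by linarith) one_pos hr
  simpa [Real.rpow_one, neg_mul] using this

lemma my_inner_t {s p c : ℝ} (hc : 0 < c) {x : ℝ} (hx : 0 < x) :
    ∫ t in Ioi (0:ℝ), x ^ (s - 1) * Real.exp (-(p * x)) * Real.exp (-((x + c) * t))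
      = x ^ (s - 1) * Real.exp (-(p * x)) * (x + c)⁻¹ := by
  rw [integral_const_mul, my_exp_integral (add_pos hx hc)]

lemma my_prod_integrable {s p c : ℝ} (hs : 0 < s) (hp : 0 < p) (hc : 0 < c) :
    Integrable (fun z : ℝ × ℝ =>
        z.1 ^ (s - 1) * Real.exp (-(p * z.1)) * Real.exp (-((z.1 + c) * z.2)))
      ((volume.restrict (Ioi 0)).prod (volume.restrict (Ioi 0))) := by
  have hFmeas : AEStronglyMeasurable (fun z : ℝ × ℝ =>
      z.1 ^ (s - 1) * Real.exp (-(p * z.1)) * Real.exp (-((z.1 + c) * z.2)))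
      ((volume.restrict (Ioi 0)).prod (volume.restrict (Ioi 0))) := by
    apply Measurable.aestronglyMeasurable
    fun_prop
  rw [integrable_prod_iff hFmeas]
  constructor
  · filter_upwards [ae_restrict_mem measurableSet_Ioi] with x hx
    have h := (exp_neg_integrableOn_Ioi 0 (add_pos hx hc)).const_mul
      (x ^ (s - 1) * Real.exp (-(p * x)))
    simpa only [neg_mul] using h
  · apply Integrable.mono'
      (g := fun x : ℝ => x ^ (s - 1) * Real.exp (-(p * x)) * c⁻¹)
    · exact (my_gamma_integrable hs hp).mul_const _
    · exact hFmeas.norm.integral_prod_right'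
    · filter_upwards [ae_restrict_mem measurableSet_Ioi] with x hx
      have hC : 0 ≤ x ^ (s - 1) * Real.exp (-(p * x)) :=
        mul_nonneg (Real.rpow_nonneg (le_of_lt hx) _) (Real.exp_nonneg _)
      have hnorm : (fun t : ℝ => ‖x ^ (s - 1) * Real.exp (-(p * x)) * Real.exp (-((x + c) * t))‖)
          = fun t : ℝ => x ^ (s - 1) * Real.exp (-(p * x)) * Real.exp (-((x + c) * t)) :=
        funext fun t => Real.norm_of_nonneg (mul_nonneg hC (Real.exp_nonneg _))
      rw [Real.norm_of_nonneg (integral_nonneg fun t => norm_nonneg _), hnorm,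
        my_inner_t hc hx]
      exact mul_le_mul_of_nonneg_left
        (inv_anti₀ hc (le_add_of_nonneg_left (le_of_lt hx))) hC

lemma my_integral_comp_add_right_Ioi (g : ℝ → ℝ) (a d : ℝ) :
    ∫ x in Ioi a, g (x + d) = ∫ x in Ioi (a + d), g x := by
  rw [← integral_indicator measurableSet_Ioi, ← integral_indicator measurableSet_Ioi,
    ← integral_add_right_eq_self (fun x => (Ioi (a + d)).indicator g x) d]
  congr 1
  ext x
  simp [Set.indicator_apply, mem_Ioi, add_lt_add_iff_right]

lemma key_stieltjes {s p c : ℝ} (hs : 0 < s) (hp : 0 < p) (hc : 0 < c) :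
    ∫ x in Ioi (0:ℝ), x ^ (s - 1) * Real.exp (-(p * x)) / (x + c)
      = c ^ (s - 1) * Real.exp (c * p) * Real.Gamma s * uiGamma (1 - s) (c * p) := by
  have hswap : (∫ x in Ioi (0:ℝ), ∫ t in Ioi (0:ℝ),
        x ^ (s - 1) * Real.exp (-(p * x)) * Real.exp (-((x + c) * t)))
      = ∫ t in Ioi (0:ℝ), ∫ x in Ioi (0:ℝ),
        x ^ (s - 1) * Real.exp (-(p * x)) * Real.exp (-((x + c) * t)) :=
    integral_integral_swap (my_prod_integrable hs hp hc)
  have h1 : (∫ x in Ioi (0:ℝ), x ^ (s - 1) * Real.exp (-(p * x)) / (x + c))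
      = ∫ x in Ioi (0:ℝ), ∫ t in Ioi (0:ℝ),
          x ^ (s - 1) * Real.exp (-(p * x)) * Real.exp (-((x + c) * t)) := by
    refine setIntegral_congr_fun measurableSet_Ioi fun x hx => ?_
    rw [my_inner_t hc hx, div_eq_mul_inv]
  have hinner_x : ∀ t ∈ Ioi (0:ℝ),
      (∫ x in Ioi (0:ℝ), x ^ (s - 1) * Real.exp (-(p * x)) * Real.exp (-((x + c) * t)))
        = Real.Gamma s * (Real.exp (-(c * t)) * (p + t) ^ (-s)) := by
    intro t ht
    have h0 : 0 < p + t := add_pos hp ht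
    have hfun : (fun x : ℝ => x ^ (s - 1) * Real.exp (-(p * x)) * Real.exp (-((x + c) * t)))
        = fun x : ℝ => Real.exp (-(c * t)) * (x ^ (s - 1) * Real.exp (-((p + t) * x))) := by
      funext x
      rw [mul_assoc, ← Real.exp_add, show -(p * x) + -((x + c) * t) = -(c * t) + -((p + t) * x)
        by ring, Real.exp_add]
      ring
    rw [hfun, integral_const_mul, Real.integral_rpow_mul_exp_neg_mul_Ioi hs h0,
      one_div, Real.inv_rpow h0.le, ← Real.rpow_neg h0.le]
    ring
  have h2 : (∫ t in Ioi (0:ℝ), ∫ x in Ioi (0:ℝ),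
        x ^ (s - 1) * Real.exp (-(p * x)) * Real.exp (-((x + c) * t)))
      = Real.Gamma s * ∫ t in Ioi (0:ℝ), Real.exp (-(c * t)) * (p + t) ^ (-s) := by
    rw [← integral_const_mul]
    exact setIntegral_congr_fun measurableSet_Ioi fun t ht => hinner_x t ht
  have hpt : ∀ t ∈ Ioi (0:ℝ),
      Real.exp (-(c * t)) * (p + t) ^ (-s)
        = (c ^ s * Real.exp (c * p))
          * (Real.exp (-(c * t + c * p)) * (c * t + c * p) ^ (-s)) := by
    intro t ht
    have h0 : (0:ℝ) ≤ t + p := by have := ht.out; linarith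
    rw [show c * t + c * p = c * (t + p) by ring, Real.mul_rpow hc.le h0,
      show -(c * (t + p)) = -(c * t) + -(c * p) by ring, Real.exp_add, add_comm p t]
    have e1 : Real.exp (c * p) * Real.exp (-(c * p)) = 1 := by
      rw [← Real.exp_add]; simp
    have e2 : c ^ s * c ^ (-s) = 1 := by
      rw [← Real.rpow_add hc]; simp
    calc Real.exp (-(c * t)) * (t + p) ^ (-s)
        = (c ^ s * c ^ (-s)) * (Real.exp (c * p) * Real.exp (-(c * p)))
          * (Real.exp (-(c * t)) * (t + p) ^ (-s)) := by rw [e1, e2]; ring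
      _ = c ^ s * Real.exp (c * p)
          * (Real.exp (-(c * t)) * Real.exp (-(c * p)) * (c ^ (-s) * (t + p) ^ (-s))) := by
          ring
  have hui : uiGamma (1 - s) (c * p)
      = ∫ u in Ioi (c * p), Real.exp (-u) * u ^ (-s) := by
    simp only [uiGamma, show (1:ℝ) - s - 1 = -s by ring]
  have h3 : (∫ t in Ioi (0:ℝ), Real.exp (-(c * t)) * (p + t) ^ (-s))
      = c ^ (s - 1) * Real.exp (c * p) * uiGamma (1 - s) (c * p) := by
    rw [setIntegral_congr_fun measurableSet_Ioi hpt, integral_const_mul]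
    have hgc : (∫ t in Ioi (0:ℝ), Real.exp (-(c * t + c * p)) * (c * t + c * p) ^ (-s))
        = c⁻¹ * ∫ u in Ioi (c * p), Real.exp (-u) * u ^ (-s) := by
      have hcm := integral_comp_mul_left_Ioi
        (fun u => Real.exp (-(u + c * p)) * (u + c * p) ^ (-s)) 0 hc
      simp only [mul_zero, smul_eq_mul] at hcm
      rw [hcm, my_integral_comp_add_right_Ioi
        (fun u => Real.exp (-u) * u ^ (-s)) 0 (c * p), zero_add]
    rw [hgc, hui, Real.rpow_sub hc, Real.rpow_one]
    ring
  rw [h1, hswap, h2, h3]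
  ring

theorem stieltjes_transform_gamma (a b c : ℝ) (ha : 0 < a) (hb : b < 0) (hc : 0 < c) :
    (∫ x in Set.Ioi (0 : ℝ), x ^ (a / 2 - 1) * Real.exp (b * x / 2) / (x + c))
      = c ^ (a / 2 - 1) * Real.exp (-(b * c) / 2) * Real.Gamma (a / 2)
        * uiGamma (1 - a / 2) (-(b * c) / 2) := by
  have hs : 0 < a / 2 := by linarith
  have hp : 0 < -b / 2 := by linarith
  have key := key_stieltjes hs hp hc
  simp_rw [show ∀ x : ℝ, b * x / 2 = -(-b / 2 * x) from fun x => by ring]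
  rw [key, show c * (-b / 2) = -(b * c) / 2 by ring]
end

section
/- Let a > 2 and b < 0, and define for c > 0: ψ_c = (−bc/2)^{a/2} e^{−bc/2} Γ(1−a/2, −bc/2), A_c = φ_c^{−1}[[c(ψ_c−1) − a/b, ψ_c−1], [ψ_c−1, ψ_c/c]] with φ_c = ψ_c(1 − a/(bc)) − 1, and L_c = (1/2)[[ (a/c)ψ_c + b(1−ψ_c), (a+2−bc)(1−ψ_c) − a], [(a+2−bc)(1−ψ_c) − a, ψ_c c(a+4−b) − 4c − bc² − 2a/b]]. Then A_c L_c A_c converges, as c → 0⁺, to the matrix Σ^{−1} where Σ = [[−b/(a−2), 1], [1, −a/b]]. -/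
open Real Set Filter MeasureTheory

/-- The matrix `A_c`. -/
noncomputable def Amat (a b c : ℝ) : Matrix (Fin 2) (Fin 2) ℝ :=
  (psi a b c * (1 - a / (b * c)) - 1)⁻¹ •
    !![c * (psi a b c - 1) - a / b, psi a b c - 1; psi a b c - 1, psi a b c / c]

/-- The matrix `L_c`. -/
noncomputable def Lmat (a b c : ℝ) : Matrix (Fin 2) (Fin 2) ℝ :=
  (1 / 2 : ℝ) •
    !![a / c * psi a b c + b * (1 - psi a b c), (a + 2 - b * c) * (1 - psi a b c) - a;
       (a + 2 - b * c) * (1 - psi a b c) - a,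
       psi a b c * c * (a + 4 - b) - 4 * c - b * c ^ 2 - 2 * a / b]

lemma uiGamma_scale (α : ℝ) {y : ℝ} (hy : 0 < y) :
    y ^ (α - 1) * uiGamma (1 - α) y = ∫ s in Ioi (1:ℝ), Real.exp (-(y * s)) * s ^ (-α) := by
  have h := integral_comp_mul_left_Ioi (fun t => Real.exp (-t) * t ^ (-α)) 1 hy
  rw [mul_one] at h
  have h2 : ∀ s ∈ Ioi (1:ℝ), Real.exp (-(y*s)) * (y*s) ^ (-α)
      = y ^ (-α) • (Real.exp (-(y*s)) * s ^ (-α)) := by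
    intro s hs
    rw [Real.mul_rpow hy.le (le_of_lt (lt_trans one_pos hs))]
    rw [smul_eq_mul]; ring
  rw [setIntegral_congr_fun measurableSet_Ioi h2, integral_smul, smul_eq_mul, smul_eq_mul] at h
  have huiG : uiGamma (1-α) y = ∫ t in Ioi y, Real.exp (-t) * t ^ (-α) := by
    unfold uiGamma; norm_num
  have e1 : y ^ (α-1) = y^α * y⁻¹ := by
    rw [show α - 1 = α + (-1) by ring, Real.rpow_add hy, Real.rpow_neg_one]
  have e2 : y^α * (y^(-α)) = 1 := by
    rw [← Real.rpow_add hy]; simp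
  calc y ^ (α-1) * uiGamma (1-α) y
      = y^α * (y⁻¹ * ∫ t in Ioi y, Real.exp (-t) * t ^ (-α)) := by rw [e1, huiG]; ring
    _ = y^α * (y^(-α) * ∫ s in Ioi (1:ℝ), Real.exp (-(y * s)) * s ^ (-α)) := by rw [h]
    _ = (y^α * y^(-α)) * ∫ s in Ioi (1:ℝ), Real.exp (-(y * s)) * s ^ (-α) := by ring
    _ = _ := by rw [e2, one_mul]

lemma key_s19 (α : ℝ) (hα : 1 < α) :
    Tendsto (fun y : ℝ => y ^ (α - 1) * uiGamma (1 - α) y) (nhdsWithin 0 (Ioi 0))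
      (nhds (1 / (α - 1))) := by
  have hmeas : ∀ y : ℝ, AEStronglyMeasurable (fun s : ℝ => Real.exp (-(y * s)) * s ^ (-α))
      (volume.restrict (Ioi 1)) := by
    intro y
    apply ContinuousOn.aestronglyMeasurable _ measurableSet_Ioi
    exact ((Real.continuous_exp.comp (continuous_const.mul continuous_id).neg).continuousOn.mul
      (continuousOn_id.rpow_const (fun x hx => Or.inl (ne_of_gt (lt_trans one_pos hx)))))
  have hbound : ∀ᶠ y in nhdsWithin (0:ℝ) (Ioi 0),
      ∀ᵐ s ∂(volume.restrict (Ioi (1:ℝ))), ‖Real.exp (-(y * s)) * s ^ (-α)‖ ≤ s ^ (-α) := by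
    filter_upwards [self_mem_nhdsWithin] with y (hy : 0 < y)
    filter_upwards [ae_restrict_mem measurableSet_Ioi] with s (hs : 1 < s)
    have hs0 : 0 < s := lt_trans one_pos hs
    rw [norm_mul, Real.norm_eq_abs, Real.norm_eq_abs, abs_of_pos (Real.exp_pos _),
      abs_of_pos (Real.rpow_pos_of_pos hs0 _)]
    nlinarith [Real.exp_le_one_iff.2 (by nlinarith : -(y*s) ≤ 0),
      (Real.rpow_pos_of_pos hs0 (-α)), Real.exp_pos (-(y*s))]
  have hint : Integrable (fun s : ℝ => s ^ (-α)) (volume.restrict (Ioi 1)) :=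
    integrableOn_Ioi_rpow_of_lt (by linarith) one_pos
  have hlim : ∀ᵐ s ∂(volume.restrict (Ioi (1:ℝ))),
      Tendsto (fun y : ℝ => Real.exp (-(y * s)) * s ^ (-α)) (nhdsWithin 0 (Ioi 0))
        (nhds (s ^ (-α))) := by
    filter_upwards with s
    have : Tendsto (fun y : ℝ => Real.exp (-(y * s)) * s ^ (-α)) (nhds 0)
        (nhds (Real.exp (-(0 * s)) * s ^ (-α))) := by
      exact ((Real.continuous_exp.comp ((continuous_id.mul continuous_const).neg)).mul
        continuous_const).tendsto 0
    simpa using this.mono_left nhdsWithin_le_nhds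
  have h := tendsto_integral_filter_of_dominated_convergence (μ := volume.restrict (Ioi 1))
    (F := fun y s => Real.exp (-(y * s)) * s ^ (-α)) (f := fun s => s ^ (-α))
    (fun s => s ^ (-α)) (Eventually.of_forall hmeas) hbound hint hlim
  have hval : (∫ s in Ioi (1:ℝ), s ^ (-α)) = 1 / (α - 1) := by
    rw [integral_Ioi_rpow_of_lt (by linarith) one_pos]
    rw [Real.one_rpow]
    rw [div_eq_div_iff (by linarith) (by linarith : α - 1 ≠ 0)]
    ring
  rw [hval] at h
  apply h.congr'
  filter_upwards [self_mem_nhdsWithin] with y (hy : 0 < y)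
  exact (uiGamma_scale α hy).symm


lemma psi_div_c_tendsto (a b : ℝ) (ha : 2 < a) (hb : b < 0) :
    Tendsto (fun c : ℝ => psi a b c / c) (nhdsWithin 0 (Ioi 0))
      (nhds (-b / (a - 2))) := by
  have hα : 1 < a / 2 := by linarith
  have hy : Tendsto (fun c : ℝ => -(b*c)/2) (nhdsWithin 0 (Ioi 0)) (nhdsWithin 0 (Ioi 0)) := by
    apply tendsto_nhdsWithin_of_tendsto_nhds_of_eventually_within
    · have : Tendsto (fun c : ℝ => -(b*c)/2) (nhds 0) (nhds (-(b*0)/2)) :=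
        (Continuous.div_const (continuous_const.mul continuous_id).neg 2).tendsto 0
      simpa using this.mono_left nhdsWithin_le_nhds
    · filter_upwards [self_mem_nhdsWithin] with c (hc : 0 < c)
      have : 0 < -(b*c)/2 := by nlinarith
      exact this
  have hexp : Tendsto (fun c : ℝ => Real.exp (-(b*c)/2)) (nhdsWithin 0 (Ioi 0)) (nhds 1) := by
    have := (Real.continuous_exp.tendsto 0).comp (hy.mono_right nhdsWithin_le_nhds)
    simpa [Function.comp_def] using this
  have hkey : Tendsto (fun c : ℝ => (-(b*c)/2) ^ (a/2 - 1) * uiGamma (1 - a/2) (-(b*c)/2))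
      (nhdsWithin 0 (Ioi 0)) (nhds (1 / (a/2 - 1))) := (key_s19 (a/2) hα).comp hy
  have hmain : Tendsto (fun c : ℝ => (-b/2) * (Real.exp (-(b*c)/2) *
      ((-(b*c)/2) ^ (a/2 - 1) * uiGamma (1 - a/2) (-(b*c)/2))))
      (nhdsWithin 0 (Ioi 0)) (nhds ((-b/2) * (1 * (1 / (a/2 - 1))))) :=
    tendsto_const_nhds.mul (hexp.mul hkey)
  have hval : (-b/2) * (1 * (1 / (a/2 - 1))) = -b / (a - 2) := by
    have h1 : a/2 - 1 ≠ 0 := ne_of_gt (by linarith)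
    have h2 : a - 2 ≠ 0 := ne_of_gt (by linarith)
    field_simp
  rw [hval] at hmain
  apply hmain.congr'
  filter_upwards [self_mem_nhdsWithin] with c (hc : 0 < c)
  have hy0 : 0 < -(b*c)/2 := by nlinarith
  have hpow : (-(b*c)/2) ^ (a/2) = (-(b*c)/2) ^ (a/2 - 1) * (-(b*c)/2) := by
    conv_lhs => rw [show a/2 = (a/2-1)+1 by ring]
    rw [Real.rpow_add hy0, Real.rpow_one]
  unfold psi
  rw [hpow]
  field_simp


lemma psi_tendsto_zero (a b : ℝ) (ha : 2 < a) (hb : b < 0) :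
    Tendsto (fun c : ℝ => psi a b c) (nhdsWithin 0 (Ioi 0)) (nhds 0) := by
  have hc0 : Tendsto (fun c : ℝ => c) (nhdsWithin (0:ℝ) (Ioi 0)) (nhds 0) :=
    tendsto_id.mono_right nhdsWithin_le_nhds
  have := (psi_div_c_tendsto a b ha hb).mul hc0
  rw [mul_zero] at this
  apply this.congr'
  filter_upwards [self_mem_nhdsWithin] with c (hc : 0 < c)
  field_simp

lemma tendsto_fin2 {l : Filter ℝ} {f g h k : ℝ → ℝ} {w x y z : ℝ}
    (hf : Tendsto f l (nhds w)) (hg : Tendsto g l (nhds x)) (hh : Tendsto h l (nhds y))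
    (hk : Tendsto k l (nhds z)) :
    Tendsto (fun c => (!![f c, g c; h c, k c] : Matrix (Fin 2) (Fin 2) ℝ)) l
      (nhds !![w, x; y, z]) := by
  refine tendsto_pi_nhds.2 ?_
  intro i
  rw [tendsto_pi_nhds]
  intro j
  fin_cases i <;> fin_cases j
  · simpa using hf
  · simpa using hg
  · simpa using hh
  · simpa using hk

theorem ALA_tendsto_mle_covariance (a b : ℝ) (ha : 2 < a) (hb : b < 0) :
    Filter.Tendsto (fun c : ℝ => Amat a b c * Lmat a b c * Amat a b c)
      (nhdsWithin 0 (Set.Ioi 0))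
      (nhds (!![-b / (a - 2), 1; 1, -a / b] : Matrix (Fin 2) (Fin 2) ℝ)⁻¹) := by
  have ha2 : (0:ℝ) < a - 2 := by linarith
  have hb0 : b ≠ 0 := ne_of_lt hb
  have hpsic := psi_div_c_tendsto a b ha hb
  have hpsi := psi_tendsto_zero a b ha hb
  have hc0 : Tendsto (fun c : ℝ => c) (nhdsWithin (0:ℝ) (Ioi 0)) (nhds 0) :=
    tendsto_id.mono_right nhdsWithin_le_nhds
  set k : ℝ := -b / (a - 2) with hk
  -- limit of phi
  have hφ : Tendsto (fun c => psi a b c * (1 - a / (b * c)) - 1) (nhdsWithin 0 (Ioi 0))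
      (nhds (2 / (a - 2))) := by
    have h1 : Tendsto (fun c => psi a b c - (a / b) * (psi a b c / c) - 1)
        (nhdsWithin (0:ℝ) (Ioi 0)) (nhds (0 - (a / b) * k - 1)) :=
      (hpsi.sub (tendsto_const_nhds.mul hpsic)).sub tendsto_const_nhds
    have hval : 0 - (a / b) * k - 1 = 2 / (a - 2) := by
      rw [hk]; field_simp; ring
    rw [hval] at h1
    apply h1.congr'
    filter_upwards [self_mem_nhdsWithin] with c (hc : 0 < c)
    field_simp
  have hφinv : Tendsto (fun c => (psi a b c * (1 - a / (b * c)) - 1)⁻¹)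
      (nhdsWithin (0:ℝ) (Ioi 0)) (nhds (2 / (a - 2))⁻¹) :=
    hφ.inv₀ (ne_of_gt (by positivity))
  -- limit of Amat
  set M : Matrix (Fin 2) (Fin 2) ℝ := (2 / (a - 2))⁻¹ • !![-a / b, -1; -1, k] with hM
  have hA : Tendsto (fun c => Amat a b c) (nhdsWithin (0:ℝ) (Ioi 0)) (nhds M) := by
    apply Tendsto.smul hφinv
    apply tendsto_fin2
    · rw [show (-a/b : ℝ) = 0 * (0 - 1) - a / b by ring]
      exact (hc0.mul (hpsi.sub tendsto_const_nhds)).sub tendsto_const_nhds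
    · rw [show (-1 : ℝ) = 0 - 1 by ring]
      exact hpsi.sub tendsto_const_nhds
    · rw [show (-1 : ℝ) = 0 - 1 by ring]
      exact hpsi.sub tendsto_const_nhds
    · exact hpsic
  -- limit of Lmat
  set Sg : Matrix (Fin 2) (Fin 2) ℝ := !![-b / (a - 2), 1; 1, -a / b] with hSg
  have hL : Tendsto (fun c => Lmat a b c) (nhdsWithin (0:ℝ) (Ioi 0)) (nhds Sg) := by
    have h00 : Tendsto (fun c => a / c * psi a b c + b * (1 - psi a b c))
        (nhdsWithin (0:ℝ) (Ioi 0)) (nhds (a * k + b * (1 - 0))) := by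
      have h1 : Tendsto (fun c => a * (psi a b c / c) + b * (1 - psi a b c))
          (nhdsWithin (0:ℝ) (Ioi 0)) (nhds (a * k + b * (1 - 0))) :=
        (tendsto_const_nhds.mul hpsic).add (tendsto_const_nhds.mul (tendsto_const_nhds.sub hpsi))
      apply h1.congr'
      filter_upwards [self_mem_nhdsWithin] with c (hc : 0 < c)
      field_simp
    have h01 : Tendsto (fun c => (a + 2 - b * c) * (1 - psi a b c) - a)
        (nhdsWithin (0:ℝ) (Ioi 0)) (nhds ((a + 2 - b * 0) * (1 - 0) - a)) :=
      ((((tendsto_const_nhds.sub (tendsto_const_nhds.mul hc0))).mul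
        (tendsto_const_nhds.sub hpsi))).sub tendsto_const_nhds
    have h11 : Tendsto (fun c => psi a b c * c * (a + 4 - b) - 4 * c - b * c ^ 2 - 2 * a / b)
        (nhdsWithin (0:ℝ) (Ioi 0))
        (nhds (0 * 0 * (a + 4 - b) - 4 * 0 - b * 0 ^ 2 - 2 * a / b)) :=
      ((((hpsi.mul hc0).mul tendsto_const_nhds).sub (tendsto_const_nhds.mul hc0)).sub
        (tendsto_const_nhds.mul (hc0.pow 2))).sub tendsto_const_nhds
    have := Tendsto.smul (tendsto_const_nhds (x := (1/2:ℝ))) (tendsto_fin2 h00 h01 h01 h11)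
    convert this using 2
    · rfl
    rw [hSg]
    have e00 : (1/2:ℝ) * (a * k + b * (1 - 0)) = -b / (a - 2) := by
      rw [hk]; field_simp; ring
    have e01 : (1/2:ℝ) * ((a + 2 - b * 0) * (1 - 0) - a) = 1 := by ring
    have e11 : (1/2:ℝ) * (0 * 0 * (a + 4 - b) - 4 * 0 - b * 0 ^ 2 - 2 * a / b) = -a / b := by
      field_simp; ring
    ext i j
    fin_cases i <;> fin_cases j <;>
      simp [Matrix.smul_apply, smul_eq_mul] <;>
      first
        | linarith [e00] | linarith [e01] | linarith [e11]
  -- algebra: M * Sg * M = Sg⁻¹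
  have hMS : M * Sg = 1 := by
    rw [hM, hSg, Matrix.smul_mul]
    ext i j
    fin_cases i <;> fin_cases j <;>
      simp [Matrix.mul_apply, Fin.sum_univ_two, Matrix.smul_apply, smul_eq_mul,
        Matrix.one_apply, hk] <;>
      field_simp <;> ring
  have hSgM : Sg * M = 1 := by
    rw [hM, hSg, Matrix.mul_smul]
    ext i j
    fin_cases i <;> fin_cases j <;>
      simp [Matrix.mul_apply, Fin.sum_univ_two, Matrix.smul_apply, smul_eq_mul,
        Matrix.one_apply, hk] <;>
      field_simp <;> ring
  have hinv : Sg⁻¹ = M := Matrix.inv_eq_left_inv hMS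
  have hfinal : M * Sg * M = Sg⁻¹ := by rw [hMS, one_mul, hinv]
  have := (hA.mul hL).mul hA
  rw [hfinal] at this
  exact this
end
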